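/- arXiv:2409.17218 — 3 statements merged into one kernel-verified Lean document; each statement's English description precedes it below -/
import Mathlib

section
/- Let G=(V,E) be a weighted graph with boundary ∂=A⊔B⊔C and fix integers n≥2 and even m≥2. For every q:V→P_{2n} with q≡q_A on A, q≡q_B on B, q≡id on C, one has Q(q) ≥ B(b∘q), where (b∘q)(v)=b(q(v)) is the induced Boolean configuration. Consequently Q ≥ B. -/
open scoped Classical

noncomputable section

namespace RTN

/-! ## Set partitions -/

/-- Number of blocks of a set partition (as an integer). -/
def nb {α : Type*} (p : Setoid α) : ℤ := Nat.card (Quotient p)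

/-- The partition distance `d(p,q) = #(p) + #(q) - 2 #(p ⊔ q)`. -/
def pdist {α : Type*} (p q : Setoid α) : ℤ := nb p + nb q - 2 * nb (p ⊔ q)

lemma pdist_comm {α : Type*} (p q : Setoid α) : pdist p q = pdist q p := by
  unfold pdist
  rw [sup_comm p q]
  ring

/-- `k` is a singlet (block of size one) of the partition `p`. -/
def IsSinglet {α : Type*} (p : Setoid α) (k : α) : Prop := ∀ y, p.r k y → y = k

/-- The number of singlets `#₁(p)` of a partition. -/
def nS {α : Type*} (p : Setoid α) : ℤ := Nat.card {k : α // IsSinglet p k}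

/-- The singlet distance `d₁(s₁,s₂) = #₁(s₁) + #₁(s₂) - 2 #₁(s₁ ⊔ s₂)`. -/
def sdist {α : Type*} (s₁ s₂ : Setoid α) : ℤ := nS s₁ + nS s₂ - 2 * nS (s₁ ⊔ s₂)

/-- The singlet pattern `s(p)`: the coarsest partition whose singlets are exactly
those of `p` (all non-singlet elements lie in one block). -/
def spat {α : Type*} (p : Setoid α) : Setoid α where
  r x y := x = y ∨ (¬ IsSinglet p x ∧ ¬ IsSinglet p y)
  iseqv := by
    refine ⟨fun x => Or.inl rfl, ?_, ?_⟩
    · intro x y h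
      rcases h with rfl | ⟨hx, hy⟩
      · exact Or.inl rfl
      · exact Or.inr ⟨hy, hx⟩
    · intro x y z h1 h2
      rcases h1 with rfl | ⟨hx, hy⟩
      · exact h2
      · rcases h2 with rfl | ⟨_, hz⟩
        · exact Or.inr ⟨hx, hy⟩
        · exact Or.inr ⟨hx, hz⟩

/-- The bit `b^k(p)`: `0` if `p` has a singlet at `k`, else `1`. -/
def bbit {α : Type*} (p : Setoid α) (k : α) : ℤ := if IsSinglet p k then 0 else 1

/-- The size of the block of `p` containing `x`. -/
def blockSize {α : Type*} (p : Setoid α) (x : α) : ℕ := Nat.card {y : α // p.r x y}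

noncomputable instance {α : Type*} [Finite α] (s : Setoid α) : Fintype (Quotient s) :=
  Fintype.ofFinite _

/-! ## Permutations -/

/-- The partition of `α` into orbits (cycles) of a permutation. -/
def orbitSetoid {α : Type*} (g : Equiv.Perm α) : Setoid α where
  r x y := ∃ k : ℤ, (g ^ k) x = y
  iseqv := by
    refine ⟨fun x => ⟨0, by simp⟩, ?_, ?_⟩
    · rintro x y ⟨k, rfl⟩
      exact ⟨-k, by simp [← Equiv.Perm.mul_apply, ← zpow_add]⟩
    · rintro x y z ⟨k, rfl⟩ ⟨l, rfl⟩
      exact ⟨l + k, by rw [zpow_add, Equiv.Perm.mul_apply]⟩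

/-- The number of cycles `#(g)` of a permutation (fixed points included). -/
def ncyc {α : Type*} (g : Equiv.Perm α) : ℤ := nb (orbitSetoid g)

/-- The Cayley distance `d(g,h) = N - #(g h⁻¹)`. -/
def cayley {α : Type*} [Fintype α] (g h : Equiv.Perm α) : ℤ :=
  (Fintype.card α : ℤ) - ncyc (g * h⁻¹)

lemma orbitSetoid_inv {α : Type*} (g : Equiv.Perm α) : orbitSetoid g⁻¹ = orbitSetoid g := by
  apply Setoid.ext
  intro x y
  constructor
  · rintro ⟨k, hk⟩
    exact ⟨-k, by rw [← inv_zpow']; exact hk⟩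
  · rintro ⟨k, hk⟩
    exact ⟨-k, by rw [inv_zpow', neg_neg]; exact hk⟩

lemma cayley_comm {α : Type*} [Fintype α] (g h : Equiv.Perm α) : cayley g h = cayley h g := by
  unfold cayley ncyc
  rw [show h * g⁻¹ = (g * h⁻¹)⁻¹ by rw [mul_inv_rev, inv_inv], orbitSetoid_inv]

/-- Coarse graining of a partition `p` by the blocks of `P(g₀)`: the partition of the set
of blocks of `P(g₀)` induced by `p ⊔ P(g₀)`. -/
def coarse {α : Type*} (g₀ : Equiv.Perm α) (p : Setoid α) :
    Setoid (Quotient (orbitSetoid g₀)) where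
  r u v := ∃ x y : α, Quotient.mk (orbitSetoid g₀) x = u ∧ Quotient.mk (orbitSetoid g₀) y = v ∧
    (p ⊔ orbitSetoid g₀).r x y
  iseqv := by
    refine ⟨?_, ?_, ?_⟩
    · intro u
      obtain ⟨x, rfl⟩ := Quotient.exists_rep u
      exact ⟨x, x, rfl, rfl, (p ⊔ orbitSetoid g₀).iseqv.refl x⟩
    · rintro u v ⟨x, y, hx, hy, hxy⟩
      exact ⟨y, x, hy, hx, (p ⊔ orbitSetoid g₀).iseqv.symm hxy⟩
    · rintro u v w ⟨x, y, hx, hy, hxy⟩ ⟨y', z, hy', hz, hyz⟩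
      refine ⟨x, z, hx, hz, ?_⟩
      have h1 : (orbitSetoid g₀).r y y' := Quotient.exact (hy.trans hy'.symm)
      have h2 : (p ⊔ orbitSetoid g₀).r y y' :=
        (le_sup_right : orbitSetoid g₀ ≤ p ⊔ orbitSetoid g₀) h1
      exact (p ⊔ orbitSetoid g₀).iseqv.trans hxy
        ((p ⊔ orbitSetoid g₀).iseqv.trans h2 hyz)

/-- The coarse graining `q_{g₀}(g) ∈ P_{#(g₀)}` of a permutation `g`. -/
def qc {α : Type*} (g₀ g : Equiv.Perm α) : Setoid (Quotient (orbitSetoid g₀)) :=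
  coarse g₀ (orbitSetoid g)

/-! ## Standard reflected-entropy boundary elements -/

/-- `g_B`, the product of `n` disjoint `m`-cycles `(k,ℓ) ↦ (k,ℓ+1)`. -/
def gB (n m : ℕ) : Equiv.Perm (Fin n × Fin m) :=
  Equiv.prodCongr (Equiv.refl (Fin n)) (finRotate m)

/-- `γ`, cyclically shifting `k ↦ k+1` on the elements with `ℓ` in the lower half,
fixing the rest. -/
def gamma (n m : ℕ) : Equiv.Perm (Fin n × Fin m) where
  toFun x := if m / 2 ≤ (x.2 : ℕ) then (finRotate n x.1, x.2) else x
  invFun x := if m / 2 ≤ (x.2 : ℕ) then ((finRotate n).symm x.1, x.2) else x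
  left_inv := by
    intro x
    by_cases h : m / 2 ≤ (x.2 : ℕ) <;> simp [h, -finRotate_apply, -finRotate_symm_apply]
  right_inv := by
    intro x
    by_cases h : m / 2 ≤ (x.2 : ℕ) <;> simp [h, -finRotate_apply, -finRotate_symm_apply]

/-- `g_A = γ⁻¹ g_B γ`. -/
def gA (n m : ℕ) : Equiv.Perm (Fin n × Fin m) :=
  (gamma n m)⁻¹ * gB n m * gamma n m

/-- For even `m`, `Fin m` splits into an upper and a lower half. -/
def halfEquiv (m : ℕ) (hm : m % 2 = 0) : Fin 2 × Fin (m / 2) ≃ Fin m :=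
  finProdFinEquiv.trans (finCongr (by omega))

/-- `X`, the product of the `2n` disjoint `(m/2)`-cycles cyclically permuting the
upper and the lower half of each block `k`. -/
def Xel (n m : ℕ) (hm : m % 2 = 0) : Equiv.Perm (Fin n × Fin m) :=
  Equiv.prodCongr (Equiv.refl (Fin n))
    ((halfEquiv m hm).permCongr
      (Equiv.prodCongr (Equiv.refl (Fin 2)) (finRotate (m / 2))))

/-- The set of blocks of `P(X)`; it has `2n` elements. -/
abbrev BX (n m : ℕ) (hm : m % 2 = 0) := Quotient (orbitSetoid (Xel n m hm))

/-- `q_A = q_X(g_A) ∈ P_{2n}`. -/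
def qAel (n m : ℕ) (hm : m % 2 = 0) : Setoid (BX n m hm) :=
  qc (Xel n m hm) (gA n m)

/-- `q_B = q_X(g_B) ∈ P_{2n}`. -/
def qBel (n m : ℕ) (hm : m % 2 = 0) : Setoid (BX n m hm) :=
  qc (Xel n m hm) (gB n m)

/-! ## Doubled elements (two copies) -/

/-- Two copies of the index set `{1,…,mn}`. -/
abbrev DIdx (n m : ℕ) := (Fin n × Fin m) ⊕ (Fin n × Fin m)

/-- `g̃_A = g_A ⊕ g_A`. -/
def gAt (n m : ℕ) : Equiv.Perm (DIdx n m) := Equiv.sumCongr (gA n m) (gA n m)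

/-- `g̃_B = g_B ⊕ g_B`. -/
def gBt (n m : ℕ) : Equiv.Perm (DIdx n m) := Equiv.sumCongr (gB n m) (gB n m)

/-- `X̃ = X ⊕ X`. -/
def Xt (n m : ℕ) (hm : m % 2 = 0) : Equiv.Perm (DIdx n m) :=
  Equiv.sumCongr (Xel n m hm) (Xel n m hm)

/-- The set of blocks of `P(X̃)`; it has `4n` elements. -/
abbrev BXt (n m : ℕ) (hm : m % 2 = 0) := Quotient (orbitSetoid (Xt n m hm))

/-- `q̃_A = q_{X̃}(g̃_A) ∈ P_{4n}`. -/
def qAt (n m : ℕ) (hm : m % 2 = 0) : Setoid (BXt n m hm) :=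
  qc (Xt n m hm) (gAt n m)

/-- `q̃_B = q_{X̃}(g̃_B) ∈ P_{4n}`. -/
def qBt (n m : ℕ) (hm : m % 2 = 0) : Setoid (BXt n m hm) :=
  qc (Xt n m hm) (gBt n m)

/-- A block of `P(X̃)` lies in the first copy. -/
def inCopy1 {n m : ℕ} {hm : m % 2 = 0} (u : BXt n m hm) : Prop :=
  ∃ x, Quotient.mk (orbitSetoid (Xt n m hm)) (Sum.inl x) = u

/-- `#₁⁽¹⁾(q)`: the number of singlets of `q` among the first-copy positions. -/
def nS1 {n m : ℕ} {hm : m % 2 = 0} (q : Setoid (BXt n m hm)) : ℤ :=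
  Nat.card {u : BXt n m hm // IsSinglet q u ∧ inCopy1 u}

/-- `#₁⁽²⁾(q)`: the number of singlets of `q` among the second-copy positions. -/
def nS2 {n m : ℕ} {hm : m % 2 = 0} (q : Setoid (BXt n m hm)) : ℤ :=
  Nat.card {u : BXt n m hm // IsSinglet q u ∧ ¬ inCopy1 u}

/-- `τ ∈ P_{4n}`, the two-block partition separating the two copies. -/
def tau (n m : ℕ) (hm : m % 2 = 0) : Setoid (BXt n m hm) where
  r u v := inCopy1 u ↔ inCopy1 v
  iseqv := ⟨fun _ => Iff.rfl, Iff.symm, Iff.trans⟩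

/-! ## Graphs, cuts and optimization programs -/

variable {V : Type*}

/-- Sum of an edge function along (the edge list of) a walk, with multiplicity. -/
def wkSum {β : Type*} [AddCommMonoid β] {G : SimpleGraph V} {x y : V}
    (f : Sym2 V → β) (L : G.Walk x y) : β :=
  (L.edges.map f).sum

variable [Fintype V]

/-- Sum of an edge weight function over a set of edges. -/
def wsum (f : Sym2 V → ℝ) (S : Set (Sym2 V)) : ℝ :=
  ∑ e ∈ Finset.univ.filter (· ∈ S), f e

/-- The cut surface `μ(r)`: edges of `G` with one endpoint in `r`, the other outside. -/
def mu (G : SimpleGraph V) (r : Set V) : Set (Sym2 V) :=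
  {e | e ∈ G.edgeSet ∧ ∃ x y, e = s(x, y) ∧ x ∈ r ∧ y ∉ r}

/-- `μ(r₁:r₂)`: edges of `G` with an endpoint in `r₁` and an endpoint in `r₂`. -/
def mu2 (G : SimpleGraph V) (r₁ r₂ : Set V) : Set (Sym2 V) :=
  {e | e ∈ G.edgeSet ∧ ∃ x y, e = s(x, y) ∧ x ∈ r₁ ∧ y ∈ r₂}

/-- `r` is a cut for `X : Y`. -/
def IsCut (X Y r : Set V) : Prop := X ⊆ r ∧ Y ⊆ rᶜ

/-- The minimal cut area `𝒜(X:Y)`. -/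
def minCut (G : SimpleGraph V) (w : Sym2 V → ℝ) (X Y : Set V) : ℝ :=
  sInf {a | ∃ r : Set V, IsCut X Y r ∧ a = wsum w (mu G r)}

/-- `(α,β,γ)` is a triway cut for `(A,B,C)`. -/
def IsTriway (A B C α β γ : Set V) : Prop :=
  α ∪ β ∪ γ = Set.univ ∧ Disjoint α β ∧ Disjoint β γ ∧ Disjoint α γ ∧
    A ⊆ α ∧ B ⊆ β ∧ C ⊆ γ

/-- The area of a triway cut with tensions `(t_{A:B}, t_{B:C}, t_{C:A})`. -/
def triArea (G : SimpleGraph V) (w : Sym2 V → ℝ) (tAB tBC tCA : ℝ)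
    (α β γ : Set V) : ℝ :=
  tAB * wsum w (mu2 G α β) + tBC * wsum w (mu2 G β γ) + tCA * wsum w (mu2 G γ α)

/-- The minimal triway cut area `𝒜_t(A:B:C)`. -/
def triCut (G : SimpleGraph V) (w : Sym2 V → ℝ) (tAB tBC tCA : ℝ)
    (A B C : Set V) : ℝ :=
  sInf {a | ∃ α β γ : Set V, IsTriway A B C α β γ ∧ a = triArea G w tAB tBC tCA α β γ}

/-- Boundary data: `∂ = A ⊔ B ⊔ C` (pairwise disjoint). -/
def Bdy (A B C : Set V) : Prop := Disjoint A B ∧ Disjoint A C ∧ Disjoint B C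

/-! ### The permutation optimization `R` -/

/-- The symmetric edge function induced by the Cayley distance of a vertex
configuration of permutations. -/
def permE {ι : Type*} [Fintype ι] (g : V → Equiv.Perm ι) : Sym2 V → ℝ :=
  Sym2.lift ⟨fun x y => (cayley (g x) (g y) : ℝ),
    fun x y => congrArg Int.cast (cayley_comm (g x) (g y))⟩

/-- The free energy `R(g) = Σ_e w(e) d(g(x),g(y))`. -/
def Renergy {ι : Type*} [Fintype ι] (G : SimpleGraph V) (w : Sym2 V → ℝ)
    (g : V → Equiv.Perm ι) : ℝ :=
  wsum (fun e => w e * permE g e) G.edgeSet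

/-- The optimal value `R` of the permutation optimization. -/
def Rval {ι : Type*} [Fintype ι] (G : SimpleGraph V) (w : Sym2 V → ℝ)
    (A B C : Set V) (g₁ g₂ : Equiv.Perm ι) : ℝ :=
  sInf {a | ∃ g : V → Equiv.Perm ι,
    (∀ v ∈ A, g v = g₁) ∧ (∀ v ∈ B, g v = g₂) ∧ (∀ v ∈ C, g v = 1) ∧
    a = Renergy G w g}

/-! ### The set-partition optimization `Q` -/

/-- The symmetric integer edge function induced by the partition distance of a vertex
configuration of partitions. -/
def partEZ {κ : Type*} (q : V → Setoid κ) : Sym2 V → ℤ :=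
  Sym2.lift ⟨fun x y => pdist (q x) (q y), fun x y => pdist_comm (q x) (q y)⟩

/-- The free energy `Q(q) = Σ_e w(e) d(q(x),q(y))`. -/
def Qenergy {κ : Type*} (G : SimpleGraph V) (w : Sym2 V → ℝ)
    (q : V → Setoid κ) : ℝ :=
  wsum (fun e => w e * (partEZ q e : ℝ)) G.edgeSet

/-- The optimal value `Q` of the set-partition optimization. -/
def Qval {κ : Type*} (G : SimpleGraph V) (w : Sym2 V → ℝ)
    (A B C : Set V) (q₁ q₂ : Setoid κ) : ℝ :=
  sInf {a | ∃ q : V → Setoid κ,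
    (∀ v ∈ A, q v = q₁) ∧ (∀ v ∈ B, q v = q₂) ∧ (∀ v ∈ C, q v = ⊥) ∧
    a = Qenergy G w q}

/-! ### The Boolean optimization `B` -/

/-- The Hamming distance between two bit strings. -/
def ham {κ : Type*} [Fintype κ] (b₁ b₂ : κ → Bool) : ℤ :=
  ∑ k : κ, if b₁ k = b₂ k then 0 else 1

/-- The bit string `b(q)` of a partition: `false` exactly at singlets. -/
def bvec {κ : Type*} (p : Setoid κ) : κ → Bool :=
  fun u => if IsSinglet p u then false else true

/-- Feasibility of `r` for the Boolean program at configuration `b`. -/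
def Bfeas {κ : Type*} [Fintype κ] (G : SimpleGraph V) (A B : Set V) (n : ℕ)
    (b : V → κ → Bool) (r : Sym2 V → ℕ) : Prop :=
  (∀ x ∈ A, ∀ y ∈ B, ∀ L : G.Walk x y,
    2 ∣ wkSum (fun e => (r e : ℤ)) L ∧
    wkSum (fun e => (r e : ℤ)) L ≥
      2 * ((n : ℤ) - if ∀ v ∈ L.support, ∀ k, b v k = true then 1 else 0)) ∧
  (∀ x y : V, G.Adj x y → (r s(x, y) : ℤ) ≥ ⌈(ham (b x) (b y) : ℚ) / 2⌉)

/-- The inner Boolean optimum `B(b)` at a fixed Boolean configuration `b`. -/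
def BvalAt {κ : Type*} [Fintype κ] (G : SimpleGraph V) (w : Sym2 V → ℝ)
    (A B : Set V) (n : ℕ) (b : V → κ → Bool) : ℝ :=
  sInf {a | ∃ r : Sym2 V → ℕ, Bfeas G A B n b r ∧
    a = wsum (fun e => w e * (r e : ℝ)) G.edgeSet}

/-- The optimal value `B` of the Boolean optimization. -/
def Bval (κ : Type*) [Fintype κ] (G : SimpleGraph V) (w : Sym2 V → ℝ)
    (A B C : Set V) (n : ℕ) : ℝ :=
  sInf {a | ∃ b : V → κ → Bool,
    (∀ v ∈ A ∪ B, ∀ k, b v k = true) ∧ (∀ v ∈ C, ∀ k, b v k = false) ∧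
    ∃ r : Sym2 V → ℕ, Bfeas G A B n b r ∧
      a = wsum (fun e => w e * (r e : ℝ)) G.edgeSet}

/-! ### The integer program `I` -/

/-- Feasibility of `(ρ,σ)` for the integer program. -/
def IPfeas (G : SimpleGraph V) (A B C : Set V) (n : ℕ) (ρ σ : Sym2 V → ℕ) : Prop :=
  (∀ x ∈ A, ∀ y ∈ B, ∀ L : G.Walk x y,
    2 ∣ wkSum (fun e => (σ e : ℤ) + (ρ e : ℤ)) L ∧
    wkSum (fun e => (σ e : ℤ) + (ρ e : ℤ)) L ≥
      2 * ((n : ℤ) - if wkSum (fun e => (ρ e : ℤ)) L = 0 then 1 else 0)) ∧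
  (∀ x ∈ A ∪ B, ∀ y ∈ C, ∀ L : G.Walk x y,
    wkSum (fun e => (ρ e : ℤ)) L ≥ (n : ℤ))

/-- The objective of the integer program. -/
def IPobj (G : SimpleGraph V) (w : Sym2 V → ℝ) (ρ σ : Sym2 V → ℕ) : ℝ :=
  wsum (fun e => w e * ((σ e : ℝ) + (ρ e : ℝ))) G.edgeSet

/-- The optimal value `I` of the integer program. -/
def Ival (G : SimpleGraph V) (w : Sym2 V → ℝ) (A B C : Set V) (n : ℕ) : ℝ :=
  sInf {a | ∃ ρ σ : Sym2 V → ℕ, IPfeas G A B C n ρ σ ∧ a = IPobj G w ρ σ}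

/-! ### The ℓ-intersecting cut problem `M` -/

/-- Feasibility for the `ℓ`-intersecting cut problem with boundary sets
`Γ₀, …, Γ_ℓ` and `C`, for a half-integer valued `ϱ`. -/
def Mfeas (G : SimpleGraph V) (Γ : ℕ → Set V) (ℓ : ℕ) (C : Set V)
    (ϱ : Sym2 V → ℚ) : Prop :=
  (∀ e, ∃ j : ℕ, ϱ e = (j : ℚ) / 2) ∧
  (∀ k k' : ℕ, k ≤ ℓ → k' ≤ ℓ → ∀ x ∈ Γ k, ∀ y ∈ Γ k', ∀ L : G.Walk x y,
    ∃ j : ℕ, wkSum ϱ L = |(k : ℚ) - (k' : ℚ)| + (j : ℚ)) ∧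
  (∀ k : ℕ, k ≤ ℓ → ∀ x ∈ Γ k, ∀ y ∈ C, ∀ L : G.Walk x y,
    ∃ j : ℕ, wkSum ϱ L = (ℓ : ℚ) / 2 + (j : ℚ))

/-- The objective of the `ℓ`-intersecting cut problem. -/
def Mobj (G : SimpleGraph V) (w : Sym2 V → ℝ) (ϱ : Sym2 V → ℚ) : ℝ :=
  wsum (fun e => w e * (ϱ e : ℝ)) G.edgeSet

/-- The optimal value `M` of the `ℓ`-intersecting cut problem. -/
def Mval (G : SimpleGraph V) (w : Sym2 V → ℝ) (Γ : ℕ → Set V) (ℓ : ℕ)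
    (C : Set V) : ℝ :=
  sInf {a | ∃ ϱ : Sym2 V → ℚ, Mfeas G Γ ℓ C ϱ ∧ a = Mobj G w ϱ}

/-- The complementary reduced graph `G^c`: the edges of `G` not lying entirely
inside `V'`. -/
def reducedGraph (G : SimpleGraph V) (V' : Set V) : SimpleGraph V where
  Adj x y := G.Adj x y ∧ ¬ (x ∈ V' ∧ y ∈ V')
  symm := by
    constructor
    intro x y h
    exact ⟨h.1.symm, fun hc => h.2 ⟨hc.2, hc.1⟩⟩
  loopless := by
    constructor
    intro x h
    exact G.loopless.irrefl x h.1

end RTN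

namespace QB
open RTN

variable {α : Type*}

lemma quot_exact {s : Setoid α} {a b : α}
    (h : Quotient.mk s a = Quotient.mk s b) : s a b := Quotient.exact h

lemma quot_sound {s : Setoid α} {a b : α} (h : s a b) :
    Quotient.mk s a = Quotient.mk s b := Quotient.sound h

/-- natural map between quotients of comparable setoids -/
def qmap {p P : Setoid α} (h : p ≤ P) : Quotient p → Quotient P :=
  Quotient.lift (Quotient.mk P) (fun _ _ hab => Quotient.sound (h hab))

@[simp] lemma qmap_mk {p P : Setoid α} (h : p ≤ P) (x : α) :
    qmap h (Quotient.mk p x) = Quotient.mk P x := rfl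

lemma qmap_surjective {p P : Setoid α} (h : p ≤ P) : Function.Surjective (qmap h) := by
  intro u; obtain ⟨x, rfl⟩ := Quotient.exists_rep u; exact ⟨Quotient.mk p x, rfl⟩

lemma nb_nonneg (p : Setoid α) : 0 ≤ nb p := Int.ofNat_nonneg _

lemma nb_le_nb [Finite α] {p P : Setoid α} (h : p ≤ P) : nb P ≤ nb p := by
  have := Nat.card_le_card_of_surjective _ (qmap_surjective h)
  unfold nb; exact_mod_cast this

lemma nb_pos [Finite α] [Nonempty α] (p : Setoid α) : 1 ≤ nb p := by
  have : Nonempty (Quotient p) := Nonempty.map (Quotient.mk p) ‹_›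
  have := Nat.card_pos (α := Quotient p)
  unfold nb; exact_mod_cast this

lemma nb_total [Finite α] [Nonempty α] {p : Setoid α} (h : ∀ x y, p x y) : nb p = 1 := by
  have hsub : Subsingleton (Quotient p) :=
    ⟨fun a b => Quotient.inductionOn₂ a b fun x y => Quotient.sound (h x y)⟩
  have : Nonempty (Quotient p) := Nonempty.map (Quotient.mk p) ‹_›
  have := (Nat.card_eq_one_iff_unique (α := Quotient p)).2 ⟨hsub, this⟩
  unfold nb; exact_mod_cast this

lemma char2_eq_of_add_eq_zero {R : Type*} [Ring R] [CharP R 2] {a b : R}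
    (h : a + b = 0) : a = b := by
  have : a = (a + b) + b := by rw [add_assoc, CharTwo.add_self_eq_zero, add_zero]
  rw [h, zero_add] at this; exact this

lemma pdist_nonneg [Finite α] (p q : Setoid α) : 0 ≤ pdist p q := by
  have h1 : nb (p ⊔ q) ≤ nb p := nb_le_nb le_sup_left
  have h2 : nb (p ⊔ q) ≤ nb q := nb_le_nb le_sup_right
  unfold pdist; omega

lemma pdist_self [Finite α] (p : Setoid α) : pdist p p = 0 := by
  unfold pdist; rw [sup_idem]; ring

section master

variable [Fintype α] (p s t : Setoid α)

private abbrev Vp := Quotient p → ZMod 2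

/-- the comparison linear map -/
private def Phi : ((Quotient (s ⊔ p) → ZMod 2) × (Quotient (t ⊔ p) → ZMod 2)) →ₗ[ZMod 2]
    (Quotient p → ZMod 2) where
  toFun φ := fun β => φ.1 (qmap (le_sup_right : p ≤ s ⊔ p) β) +
    φ.2 (qmap (le_sup_right : p ≤ t ⊔ p) β)
  map_add' φ ψ := by funext β; simp [Prod.fst_add]; ring
  map_smul' c φ := by funext β; simp; ring

private def Jmap : (Quotient (s ⊔ t ⊔ p) → ZMod 2) →ₗ[ZMod 2]
    ((Quotient (s ⊔ p) → ZMod 2) × (Quotient (t ⊔ p) → ZMod 2)) where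
  toFun θ := (θ ∘ qmap (sup_le (le_sup_left.trans le_sup_left) le_sup_right),
    θ ∘ qmap (sup_le (le_sup_right.trans le_sup_left) le_sup_right))
  map_add' φ ψ := rfl
  map_smul' c φ := rfl

private lemma Jmap_inj : Function.Injective (Jmap p s t) := by
  intro θ θ' h
  funext u
  obtain ⟨x, rfl⟩ := Quotient.exists_rep u
  have := congrArg (fun z => z.1 (Quotient.mk (s ⊔ p) x)) h
  exact this

private lemma range_J_eq_ker_Phi : LinearMap.range (Jmap p s t) = LinearMap.ker (Phi p s t) := by
  apply le_antisymm
  · rintro φ ⟨θ, rfl⟩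
    simp only [LinearMap.mem_ker]
    funext β
    obtain ⟨x, rfl⟩ := Quotient.exists_rep β
    show θ (Quotient.mk _ x) + θ (Quotient.mk _ x) = 0
    exact CharTwo.add_self_eq_zero _
  · rintro ⟨φ, ψ⟩ hker
    simp only [LinearMap.mem_ker] at hker
    have hk : ∀ x : α, φ (Quotient.mk (s ⊔ p) x) = ψ (Quotient.mk (t ⊔ p) x) := by
      intro x
      have := congrFun hker (Quotient.mk p x)
      simp only [Phi, LinearMap.coe_mk, AddHom.coe_mk, qmap_mk, Pi.zero_apply] at this
      exact char2_eq_of_add_eq_zero this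
    set h : α → ZMod 2 := fun w => φ (Quotient.mk (s ⊔ p) w) with hh
    have hcons : (s ⊔ t ⊔ p) ≤ Setoid.ker h := by
      have h1 : s ≤ Setoid.ker h := by
        intro x y hxy
        show h x = h y
        exact congrArg φ (Quotient.sound (le_sup_left (a := s) (b := p) hxy))
      have h2 : t ≤ Setoid.ker h := by
        intro x y hxy
        show h x = h y
        rw [hh]
        simp only
        rw [hk x, hk y]
        exact congrArg ψ (Quotient.sound (le_sup_left (a := t) (b := p) hxy))
      have h3 : p ≤ Setoid.ker h := by
        intro x y hxy
        exact congrArg φ (Quotient.sound (le_sup_right (a := s) (b := p) hxy))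
      exact sup_le (sup_le h1 h2) h3
    refine ⟨Quotient.lift h (fun a b hab => hcons hab), ?_⟩
    simp only [Jmap, LinearMap.coe_mk, AddHom.coe_mk]
    refine Prod.ext ?_ ?_
    · funext u
      obtain ⟨x, rfl⟩ := Quotient.exists_rep u
      rfl
    · funext u
      obtain ⟨x, rfl⟩ := Quotient.exists_rep u
      show h x = ψ (Quotient.mk _ x)
      exact hk x

private lemma master_rank_aux :
    (Nat.card (Quotient (s ⊔ p)) : ℤ) + Nat.card (Quotient (t ⊔ p)) =
      (Module.finrank (ZMod 2) (LinearMap.range (Phi p s t)) : ℤ) +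
        Nat.card (Quotient (s ⊔ t ⊔ p)) := by
  have h1 := LinearMap.finrank_range_add_finrank_ker (Phi p s t)
  have h2 : Module.finrank (ZMod 2) (LinearMap.ker (Phi p s t)) =
      Nat.card (Quotient (s ⊔ t ⊔ p)) := by
    rw [← range_J_eq_ker_Phi, LinearMap.finrank_range_of_inj (Jmap_inj p s t),
      Module.finrank_pi, Nat.card_eq_fintype_card]
  have h3 : Module.finrank (ZMod 2)
      ((Quotient (s ⊔ p) → ZMod 2) × (Quotient (t ⊔ p) → ZMod 2)) =
      Nat.card (Quotient (s ⊔ p)) + Nat.card (Quotient (t ⊔ p)) := by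
    rw [Module.finrank_prod, Module.finrank_pi, Module.finrank_pi,
      Nat.card_eq_fintype_card, Nat.card_eq_fintype_card]
  rw [h2, h3] at h1
  exact_mod_cast congrArg (Nat.cast : ℕ → ℤ) h1.symm

/-- MASTER inequality -/
lemma master : nb (s ⊔ p) + nb (t ⊔ p) ≤ nb p + nb (s ⊔ t ⊔ p) := by
  have h := master_rank_aux p s t
  have hle : Module.finrank (ZMod 2) (LinearMap.range (Phi p s t)) ≤
      Nat.card (Quotient p) := by
    have := Submodule.finrank_le (R := ZMod 2) (LinearMap.range (Phi p s t))
    rw [Nat.card_eq_fintype_card]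
    rwa [Module.finrank_pi] at this
  unfold nb
  omega

end master

section strict

variable [Fintype α] (p s t : Setoid α)

/-- summing a class function over the ground set -/
private def Fsum : (Quotient p → ZMod 2) →ₗ[ZMod 2] ZMod 2 where
  toFun χ := ∑ w : α, χ (Quotient.mk p w)
  map_add' φ ψ := by simp [Finset.sum_add_distrib]
  map_smul' c φ := by simp [Finset.mul_sum]

/-- summing a function that is constant on even-sized blocks gives zero -/
private lemma even_sum (g : α → ZMod 2) (s : Setoid α)
    (hconst : ∀ w w', s w w' → g w = g w')
    (heven : ∀ x : α, Even (blockSize s x)) : ∑ w : α, g w = 0 := by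
  rw [← Finset.sum_fiberwise Finset.univ (fun w => Quotient.mk s w) g]
  apply Finset.sum_eq_zero
  intro c _
  obtain ⟨x, rfl⟩ := Quotient.exists_rep c
  have hval : ∀ w ∈ Finset.univ.filter (fun w => Quotient.mk s w = Quotient.mk s x),
      g w = g x := by
    intro w hw
    simp only [Finset.mem_filter] at hw
    exact (hconst w x (Quotient.exact hw.2)).symm ▸ rfl
  calc ∑ w ∈ Finset.univ.filter (fun w => Quotient.mk s w = Quotient.mk s x), g w
      = ∑ _w ∈ Finset.univ.filter (fun w => Quotient.mk s w = Quotient.mk s x), g x :=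
        Finset.sum_congr rfl hval
    _ = (Finset.univ.filter (fun w => Quotient.mk s w = Quotient.mk s x)).card • g x :=
        by rw [Finset.sum_const]
    _ = 0 := by
        have hcard : (Finset.univ.filter (fun w => Quotient.mk s w = Quotient.mk s x)).card
            = blockSize s x := by
          rw [blockSize, Nat.card_eq_fintype_card, Fintype.card_subtype]
          congr 1
          apply Finset.filter_congr
          intro w _
          constructor
          · intro h; exact Quotient.exact h.symm
          · intro h; exact (Quotient.sound h).symm
        rw [hcard]
        obtain ⟨j, hj⟩ := heven x
        rw [hj, ← two_mul, mul_nsmul, nsmul_eq_mul]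
        simp [CharTwo.two_eq_zero]

/-- STRICT master inequality -/
lemma master_strict (u₀ : α) (hu : IsSinglet p u₀)
    (hs : ∀ x : α, Even (blockSize s x)) (ht : ∀ x : α, Even (blockSize t x)) :
    nb (s ⊔ p) + nb (t ⊔ p) + 1 ≤ nb p + nb (s ⊔ t ⊔ p) := by
  have h := master_rank_aux p s t
  -- the singlet indicator
  set χ₀ : Quotient p → ZMod 2 := fun c => if c = Quotient.mk p u₀ then 1 else 0 with hχ₀
  have hF : Fsum p χ₀ = 1 := by
    show ∑ w : α, χ₀ (Quotient.mk p w) = 1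
    rw [Finset.sum_eq_single u₀]
    · simp [hχ₀]
    · intro b _ hb
      simp only [hχ₀]
      rw [if_neg]
      intro hc
      exact hb (hu b (p.iseqv.symm (quot_exact hc)))
    · intro hb; exact absurd (Finset.mem_univ u₀) hb
  have hFsurj : Function.Surjective (Fsum p) := by
    intro c
    refine ⟨c • χ₀, ?_⟩
    rw [map_smul, hF, smul_eq_mul, mul_one]
  have hrange : LinearMap.range (Phi p s t) ≤ LinearMap.ker (Fsum p) := by
    rintro χ ⟨⟨φ, ψ⟩, rfl⟩
    simp only [LinearMap.mem_ker]
    show ∑ w : α, ((Phi p s t) (φ, ψ)) (Quotient.mk p w) = 0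
    have : ∀ w : α, ((Phi p s t) (φ, ψ)) (Quotient.mk p w) =
        φ (Quotient.mk (s ⊔ p) w) + ψ (Quotient.mk (t ⊔ p) w) := fun w => rfl
    rw [Finset.sum_congr rfl (fun w _ => this w), Finset.sum_add_distrib]
    rw [even_sum _ s (fun w w' hww' => congrArg φ (Quotient.sound
        (le_sup_left (a := s) (b := p) hww'))) hs,
      even_sum _ t (fun w w' hww' => congrArg ψ (Quotient.sound
        (le_sup_left (a := t) (b := p) hww'))) ht, add_zero]
  have hkerrank : (Module.finrank (ZMod 2) (LinearMap.ker (Fsum p)) : ℤ) =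
      (Nat.card (Quotient p) : ℤ) - 1 := by
    have h1 := LinearMap.finrank_range_add_finrank_ker (Fsum p)
    have h2 : LinearMap.range (Fsum p) = ⊤ := LinearMap.range_eq_top.2 hFsurj
    rw [h2] at h1
    have h3 : Module.finrank (ZMod 2) (⊤ : Submodule (ZMod 2) (ZMod 2)) = 1 := by
      rw [finrank_top, Module.finrank_self]
    rw [h3, Module.finrank_pi] at h1
    rw [Nat.card_eq_fintype_card]
    omega
  have hle : (Module.finrank (ZMod 2) (LinearMap.range (Phi p s t)) : ℤ) ≤
      (Nat.card (Quotient p) : ℤ) - 1 := by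
    rw [← hkerrank]
    exact_mod_cast Submodule.finrank_mono hrange
  unfold nb
  omega

end strict

/-- triangle inequality for the partition distance -/
lemma pdist_triangle [Fintype α] (x y z : Setoid α) :
    pdist x z ≤ pdist x y + pdist y z := by
  have hm := master y x z
  have h2 : nb (x ⊔ z ⊔ y) ≤ nb (x ⊔ z) := nb_le_nb le_sup_left
  rw [sup_comm z y] at hm
  unfold pdist
  omega


/-- counting singlets destroyed by coarsening -/
lemma scount [Fintype α] {p P : Setoid α} (h : p ≤ P) :
    (Finset.univ.filter (fun k => IsSinglet p k ∧ ¬ IsSinglet P k)).card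
      + 2 * Fintype.card (Quotient P) ≤ 2 * Fintype.card (Quotient p) := by
  classical
  set Aset := Finset.univ.filter (fun k => IsSinglet p k ∧ ¬ IsSinglet P k) with hAset
  set π : Quotient p → Quotient P := qmap h with hπ
  set T : Finset (Quotient p) := Aset.image (Quotient.mk p) with hT
  have hTcard : T.card = Aset.card := by
    apply Finset.card_image_of_injOn
    intro k hk k' hk' hkk'
    simp only [hAset, Finset.mem_coe, Finset.mem_filter] at hk hk'
    exact (hk.2.1 k' (quot_exact hkk')).symm
  have h1 : T.card = ∑ d : Quotient P, (T.filter (fun c => π c = d)).card :=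
    Finset.card_eq_sum_card_fiberwise (fun x _ => Finset.mem_univ _)
  have h2 : Fintype.card (Quotient p)
      = ∑ d : Quotient P, (Finset.univ.filter (fun c => π c = d)).card := by
    rw [← Finset.card_univ]
    exact Finset.card_eq_sum_card_fiberwise (fun x _ => Finset.mem_univ _)
  have key : ∀ d : Quotient P,
      (T.filter (fun c => π c = d)).card + 2
        ≤ 2 * (Finset.univ.filter (fun c => π c = d)).card := by
    intro d
    have hsub : (T.filter (fun c => π c = d)) ⊆ (Finset.univ.filter (fun c => π c = d)) := by
      intro c hc
      simp only [Finset.mem_filter] at hc ⊢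
      exact ⟨Finset.mem_univ _, hc.2⟩
    by_cases hne : (T.filter (fun c => π c = d)).Nonempty
    · obtain ⟨c, hc⟩ := hne
      simp only [Finset.mem_filter, hT, Finset.mem_image] at hc
      obtain ⟨⟨k, hkA, rfl⟩, hcd⟩ := hc
      simp only [hAset, Finset.mem_filter] at hkA
      obtain ⟨-, hks, hkns⟩ := hkA
      have : ∃ y, P y k ∧ y ≠ k := by
        by_contra hcon
        push_neg at hcon
        exact hkns (fun y hy => hcon y (P.iseqv.symm hy))
      obtain ⟨y, hy, hyk⟩ := this
      have hyne : Quotient.mk p y ≠ Quotient.mk p k := by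
        intro hc
        exact hyk (hks y (p.iseqv.symm (quot_exact hc)))
      have hmem1 : Quotient.mk p k ∈ Finset.univ.filter (fun c => π c = d) := by
        simp only [Finset.mem_filter]
        exact ⟨Finset.mem_univ _, hcd⟩
      have hmem2 : Quotient.mk p y ∈ Finset.univ.filter (fun c => π c = d) := by
        simp only [Finset.mem_filter, hπ, qmap_mk]
        refine ⟨Finset.mem_univ _, ?_⟩
        have : Quotient.mk P y = Quotient.mk P k := quot_sound hy
        rw [this]
        simpa [hπ] using hcd
      have h2le : 2 ≤ (Finset.univ.filter (fun c => π c = d)).card := by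
        rw [← Finset.card_pair hyne]
        apply Finset.card_le_card
        intro z hz
        simp only [Finset.mem_insert, Finset.mem_singleton] at hz
        rcases hz with rfl | rfl
        · exact hmem2
        · exact hmem1
      have hTle := Finset.card_le_card hsub
      omega
    · rw [Finset.not_nonempty_iff_eq_empty] at hne
      rw [hne]
      simp only [Finset.card_empty]
      have : (Finset.univ.filter (fun c => π c = d)).Nonempty := by
        obtain ⟨c, hc⟩ := qmap_surjective h d
        exact ⟨c, by simp [Finset.mem_filter, hπ, hc]⟩
      have := Finset.card_pos.2 this
      omega
  have hsum := Finset.sum_le_sum (fun d (_ : d ∈ Finset.univ) => key d)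
  rw [Finset.sum_add_distrib, ← h1, Finset.sum_const, ← Finset.mul_sum, ← h2, hTcard,
    Finset.card_univ, smul_eq_mul] at hsum
  omega

lemma not_singlet_sup_left {p q : Setoid α} {k : α} (hk : ¬ IsSinglet q k) :
    ¬ IsSinglet (p ⊔ q) k := by
  intro hc
  exact hk (fun y hy => hc y (le_sup_right (a := p) (b := q) hy))

/-- Hamming distance of singlet patterns is at most twice the partition distance -/
lemma ham_le_two_pdist [Fintype α] (p q : Setoid α) :
    ham (bvec p) (bvec q) ≤ 2 * pdist p q := by
  classical
  have hpt : ∀ k : α, (if bvec p k = bvec q k then (0:ℤ) else 1)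
      = (if IsSinglet p k ∧ ¬ IsSinglet q k then (1:ℤ) else 0)
        + (if IsSinglet q k ∧ ¬ IsSinglet p k then (1:ℤ) else 0) := by
    intro k
    by_cases h1 : IsSinglet p k <;> by_cases h2 : IsSinglet q k <;>
      simp [bvec, h1, h2]
  have hrw : ham (bvec p) (bvec q)
      = ((Finset.univ.filter (fun k => IsSinglet p k ∧ ¬ IsSinglet q k)).card : ℤ)
        + ((Finset.univ.filter (fun k => IsSinglet q k ∧ ¬ IsSinglet p k)).card : ℤ) := by
    unfold ham
    rw [Finset.sum_congr rfl (fun k _ => hpt k), Finset.sum_add_distrib]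
    congr 1 <;> rw [Finset.sum_ite, Finset.sum_const, Finset.sum_const] <;> simp
  have hs1 : (Finset.univ.filter (fun k => IsSinglet p k ∧ ¬ IsSinglet q k)).card
      ≤ (Finset.univ.filter (fun k => IsSinglet p k ∧ ¬ IsSinglet (p ⊔ q) k)).card := by
    apply Finset.card_le_card
    intro k hk
    simp only [Finset.mem_filter] at hk ⊢
    exact ⟨hk.1, hk.2.1, not_singlet_sup_left hk.2.2⟩
  have hs2 : (Finset.univ.filter (fun k => IsSinglet q k ∧ ¬ IsSinglet p k)).card
      ≤ (Finset.univ.filter (fun k => IsSinglet q k ∧ ¬ IsSinglet (p ⊔ q) k)).card := by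
    apply Finset.card_le_card
    intro k hk
    simp only [Finset.mem_filter] at hk ⊢
    refine ⟨hk.1, hk.2.1, ?_⟩
    rw [sup_comm p q]
    exact not_singlet_sup_left hk.2.2
  have hc1 := scount (le_sup_left : p ≤ p ⊔ q)
  have hc2 := scount (le_sup_right : q ≤ p ⊔ q)
  unfold pdist nb
  rw [Nat.card_eq_fintype_card, Nat.card_eq_fintype_card, Nat.card_eq_fintype_card]
  omega


/-! ### Orbit machinery -/

section orbits
variable {β : Type*}

lemma orbit_le_of_invariant (g : Equiv.Perm β) (s : Setoid β)
    (hinv : ∀ x, s x (g x)) : orbitSetoid g ≤ s := by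
  have hnat : ∀ (t : ℕ) (x : β), s x ((g ^ t) x) := by
    intro t
    induction t with
    | zero => intro x; simpa using s.iseqv.refl x
    | succ t ih =>
      intro x
      have h2 : s ((g ^ t) x) (g ((g ^ t) x)) := hinv _
      have h3 : (g ^ (t + 1)) x = g ((g ^ t) x) := by
        rw [pow_succ', Equiv.Perm.mul_apply]
      rw [h3]
      exact s.iseqv.trans (ih x) h2
  intro x y hxy
  obtain ⟨k, hk⟩ := hxy
  match k with
  | Int.ofNat t =>
    rw [Int.ofNat_eq_coe, zpow_natCast] at hk
    rw [← hk]; exact hnat t x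
  | Int.negSucc t =>
    rw [zpow_negSucc] at hk
    have : (g ^ (t + 1)) y = x := by rw [← hk, Equiv.Perm.coe_inv, Equiv.apply_symm_apply]
    have := hnat (t + 1) y
    rw [‹(g ^ (t + 1)) y = x›] at this
    exact s.iseqv.symm this

lemma orbit_eq_ker (g : Equiv.Perm β) {γ' : Type*} (f : β → γ')
    (hinv : ∀ x, f (g x) = f x)
    (hreach : ∀ x y, f x = f y → ∃ t : ℕ, (g ^ t) x = y) :
    orbitSetoid g = Setoid.ker f := by
  apply le_antisymm
  · exact orbit_le_of_invariant g (Setoid.ker f) (fun x => (hinv x).symm)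
  · intro x y hxy
    obtain ⟨t, ht⟩ := hreach x y hxy
    exact ⟨(t : ℤ), by rw [zpow_natCast]; exact ht⟩

lemma prodCongr_pow_apply {γ' : Type*} (a : Equiv.Perm β) (b : Equiv.Perm γ') (t : ℕ)
    (x : β × γ') :
    ((Equiv.prodCongr a b : Equiv.Perm (β × γ')) ^ t) x = ((a ^ t) x.1, (b ^ t) x.2) := by
  induction t with
  | zero => simp
  | succ t ih =>
    rw [pow_succ', Equiv.Perm.mul_apply, ih, pow_succ', pow_succ']
    simp

lemma permCongr_pow_apply {γ' : Type*} (e : β ≃ γ') (σ : Equiv.Perm β) (t : ℕ) (z : γ') :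
    ((e.permCongr σ) ^ t) z = e ((σ ^ t) (e.symm z)) := by
  induction t with
  | zero => simp
  | succ t ih =>
    rw [pow_succ', Equiv.Perm.mul_apply, ih, pow_succ', Equiv.Perm.mul_apply]
    simp

lemma conj_pow (γ g : Equiv.Perm β) (t : ℕ) : (γ⁻¹ * g * γ) ^ t = γ⁻¹ * g ^ t * γ := by
  induction t with
  | zero => group
  | succ t ih => rw [pow_succ, ih, pow_succ]; group

lemma conj_pow_apply (γ g : Equiv.Perm β) (t : ℕ) (x : β) :
    ((γ⁻¹ * g * γ) ^ t) x = γ⁻¹ ((g ^ t) (γ x)) := by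
  rw [conj_pow]
  simp [Equiv.Perm.mul_apply]

open Fin.NatCast in
lemma finRotate_pow_apply {N : ℕ} (t : ℕ) (j : Fin (N + 1)) :
    ((finRotate (N + 1)) ^ t) j = j + (t : Fin (N + 1)) := by
  induction t with
  | zero => simp
  | succ t ih =>
    rw [pow_succ', Equiv.Perm.mul_apply, ih, finRotate_succ_apply, Nat.cast_add,
      Nat.cast_one, add_assoc]

open Fin.NatCast in
lemma finRotate_reach {N : ℕ} (a b : Fin N) : ∃ t : ℕ, ((finRotate N) ^ t) a = b := by
  match N with
  | 0 => exact a.elim0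
  | N + 1 =>
    refine ⟨(b - a).val, ?_⟩
    rw [finRotate_pow_apply, Fin.cast_val_eq_self]
    abel

end orbits


/-! ### Concrete structure of the boundary partitions -/

lemma refl_pow_apply {β : Type*} (t : ℕ) (x : β) :
    ((Equiv.refl β : Equiv.Perm β) ^ t) x = x := by
  have h1 : (Equiv.refl β : Equiv.Perm β) = 1 := rfl
  rw [h1, one_pow]; rfl

lemma rot1 {N : ℕ} [NeZero N] (k : Fin N) : finRotate N k = k + 1 := by
  cases N with
  | zero => exact k.elim0
  | succ N' => exact finRotate_succ_apply k

section concrete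
variable (n m : ℕ) (hn : 2 ≤ n) (hm2 : 2 ≤ m) (hm : m % 2 = 0)

/-- the half-index map -/
def fX : Fin n × Fin m → Fin n × Fin 2 := fun x => (x.1, ((halfEquiv m hm).symm x.2).1)

/-- the `γ`-twisted block map -/
def fA : Fin n × Fin m → Fin n := fun x => (gamma n m x).1

lemma half_val (i : Fin 2) (j : Fin (m / 2)) :
    ((halfEquiv m hm) (i, j) : ℕ) = j.val + m / 2 * i.val := by
  simp [halfEquiv, finCongr_apply]

lemma half_cond (i : Fin 2) (j : Fin (m / 2)) :
    m / 2 ≤ ((halfEquiv m hm) (i, j) : ℕ) ↔ i = 1 := by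
  rw [half_val]
  have hj := j.2
  obtain ⟨iv, hiv⟩ := i
  interval_cases iv <;> simp [Fin.ext_iff] <;> omega

lemma cond_iff (ℓ : Fin m) :
    m / 2 ≤ (ℓ : ℕ) ↔ ((halfEquiv m hm).symm ℓ).1 = 1 := by
  conv_lhs => rw [← Equiv.apply_symm_apply (halfEquiv m hm) ℓ]
  rw [← half_cond]

lemma gamma_apply (x : Fin n × Fin m) :
    gamma n m x = if m / 2 ≤ (x.2 : ℕ) then (finRotate n x.1, x.2) else x := rfl



/-- identification of the `X` orbits -/
lemma orbX : orbitSetoid (Xel n m hm) = Setoid.ker (fX n m hm) := by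
  apply orbit_eq_ker
  · intro x
    show ((Xel n m hm x).1, ((halfEquiv m hm).symm (Xel n m hm x).2).1) = _
    simp [Xel, fX, Equiv.permCongr_apply]
  · intro x y hxy
    have h1 : x.1 = y.1 := congrArg (Prod.fst : Fin n × Fin 2 → Fin n) hxy
    have h2 : ((halfEquiv m hm).symm x.2).1 = ((halfEquiv m hm).symm y.2).1 :=
      congrArg (Prod.snd : Fin n × Fin 2 → Fin 2) hxy
    obtain ⟨t, ht⟩ := finRotate_reach ((halfEquiv m hm).symm x.2).2 ((halfEquiv m hm).symm y.2).2
    refine ⟨t, ?_⟩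
    show ((Xel n m hm) ^ t) x = y
    rw [Xel, prodCongr_pow_apply]
    refine Prod.ext ?_ ?_
    · rw [refl_pow_apply]; exact h1
    · show ((((halfEquiv m hm).permCongr _) ^ t) x.2) = y.2
      rw [permCongr_pow_apply, prodCongr_pow_apply, refl_pow_apply, ht, h2]
      simp

/-- identification of the `g_B` orbits -/
lemma orbB : orbitSetoid (gB n m) = Setoid.ker (Prod.fst : Fin n × Fin m → Fin n) := by
  apply orbit_eq_ker
  · intro x; rfl
  · intro x y hxy
    obtain ⟨t, ht⟩ := finRotate_reach x.2 y.2
    refine ⟨t, ?_⟩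
    show ((gB n m) ^ t) x = y
    rw [gB, prodCongr_pow_apply]
    exact Prod.ext (by rw [refl_pow_apply]; exact hxy) (by simpa using ht)

/-- identification of the `g_A` orbits -/
lemma orbA : orbitSetoid (gA n m) = Setoid.ker (fA n m) := by
  apply orbit_eq_ker
  · intro x
    show (gamma n m (gA n m x)).1 = (gamma n m x).1
    have : gA n m x = (gamma n m)⁻¹ (gB n m (gamma n m x)) := rfl
    rw [this, Equiv.Perm.coe_inv, Equiv.apply_symm_apply]
    rfl
  · intro x y hxy
    obtain ⟨t, ht⟩ := finRotate_reach (gamma n m x).2 (gamma n m y).2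
    have hB : ((gB n m) ^ t) (gamma n m x) = gamma n m y := by
      rw [gB, prodCongr_pow_apply]
      exact Prod.ext (by rw [refl_pow_apply]; exact hxy) (by simpa using ht)
    refine ⟨t, ?_⟩
    show ((gA n m) ^ t) x = y
    rw [gA, conj_pow_apply, hB, Equiv.Perm.coe_inv, Equiv.symm_apply_apply]

lemma kerX_le_fst : Setoid.ker (fX n m hm) ≤ Setoid.ker (Prod.fst : Fin n × Fin m → Fin n) :=
  fun _ _ h => congrArg (Prod.fst : Fin n × Fin 2 → Fin n) (Setoid.ker_def.mp h)

lemma kerX_le_fA : Setoid.ker (fX n m hm) ≤ Setoid.ker (fA n m) := by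
  intro x y h
  have h' := Setoid.ker_def.mp h
  have h1 : x.1 = y.1 := congrArg (Prod.fst : Fin n × Fin 2 → Fin n) h'
  have h2 : ((halfEquiv m hm).symm x.2).1 = ((halfEquiv m hm).symm y.2).1 :=
    congrArg (Prod.snd : Fin n × Fin 2 → Fin 2) h'
  show (gamma n m x).1 = (gamma n m y).1
  rw [gamma_apply, gamma_apply]
  by_cases hc : m / 2 ≤ (x.2 : ℕ)
  · have hc' : m / 2 ≤ (y.2 : ℕ) := by
      rw [cond_iff m hm] at hc ⊢
      rw [← h2]; exact hc
    rw [if_pos hc, if_pos hc']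
    simp [h1]
  · have hc' : ¬ m / 2 ≤ (y.2 : ℕ) := by
      rw [cond_iff m hm] at hc ⊢
      rw [← h2]; exact hc
    rw [if_neg hc, if_neg hc']
    exact h1

lemma supBX : orbitSetoid (gB n m) ⊔ orbitSetoid (Xel n m hm) = orbitSetoid (gB n m) := by
  rw [sup_eq_left, orbX, orbB]
  exact kerX_le_fst n m hm

lemma supAX : orbitSetoid (gA n m) ⊔ orbitSetoid (Xel n m hm) = orbitSetoid (gA n m) := by
  rw [sup_eq_left, orbX, orbA]
  exact kerX_le_fA n m hm

/-- block label of an element of `BX` -/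
def kB : BX n m hm → Fin n :=
  Quotient.lift (Prod.fst : Fin n × Fin m → Fin n)
    (fun a b hab => by
      have : Setoid.ker (fX n m hm) a b := by rw [← orbX]; exact hab
      exact kerX_le_fst n m hm this)

def kA : BX n m hm → Fin n :=
  Quotient.lift (fA n m)
    (fun a b hab => by
      have : Setoid.ker (fX n m hm) a b := by rw [← orbX]; exact hab
      exact kerX_le_fA n m hm this)

def hX2 : BX n m hm → Fin 2 :=
  Quotient.lift (fun x => ((halfEquiv m hm).symm x.2).1)
    (fun a b hab => by
      have : Setoid.ker (fX n m hm) a b := by rw [← orbX]; exact hab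
      exact congrArg (Prod.snd : Fin n × Fin 2 → Fin 2) (Setoid.ker_def.mp this))

lemma qB_iff (u v : BX n m hm) : (qBel n m hm) u v ↔ kB n m hm u = kB n m hm v := by
  constructor
  · rintro ⟨x, y, hx, hy, hr⟩
    rw [supBX, orbB] at hr
    rw [← hx, ← hy]
    exact hr
  · intro h
    obtain ⟨x, rfl⟩ := Quotient.exists_rep u
    obtain ⟨y, rfl⟩ := Quotient.exists_rep v
    exact ⟨x, y, rfl, rfl, by rw [supBX, orbB]; exact h⟩

lemma qA_iff (u v : BX n m hm) : (qAel n m hm) u v ↔ kA n m hm u = kA n m hm v := by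
  constructor
  · rintro ⟨x, y, hx, hy, hr⟩
    rw [supAX, orbA] at hr
    rw [← hx, ← hy]
    exact hr
  · intro h
    obtain ⟨x, rfl⟩ := Quotient.exists_rep u
    obtain ⟨y, rfl⟩ := Quotient.exists_rep v
    exact ⟨x, y, rfl, rfl, by rw [supAX, orbA]; exact h⟩

end concrete


section concrete2

/-- canonical representatives of the `2n` blocks of `P(X)` -/
def vv (n m : ℕ) (hm2 : 2 ≤ m) (hm : m % 2 = 0) (k : Fin n) (i : Fin 2) : BX n m hm :=
  Quotient.mk _ (k, (halfEquiv m hm) (i, ⟨0, by have := hm2; omega⟩))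

lemma kB_vv (n m : ℕ) (hm2 : 2 ≤ m) (hm : m % 2 = 0) (k : Fin n) (i : Fin 2) : kB n m hm (vv n m hm2 hm k i) = k := rfl

lemma hX2_vv (n m : ℕ) (hm2 : 2 ≤ m) (hm : m % 2 = 0) (k : Fin n) (i : Fin 2) : hX2 n m hm (vv n m hm2 hm k i) = i := by
  show ((halfEquiv m hm).symm ((halfEquiv m hm) (i, _))).1 = i
  simp

lemma kA_vv0 (n m : ℕ) (hm2 : 2 ≤ m) (hm : m % 2 = 0) (k : Fin n) : kA n m hm (vv n m hm2 hm k 0) = k := by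
  show fA n m (k, (halfEquiv m hm) (0, _)) = k
  rw [fA, gamma_apply, if_neg]
  rw [half_cond m hm]
  exact fun h => absurd h (by decide)

lemma kA_vv1 (n m : ℕ) [NeZero n] (hm2 : 2 ≤ m) (hm : m % 2 = 0) (k : Fin n) : kA n m hm (vv n m hm2 hm k 1) = k + 1 := by
  show fA n m (k, (halfEquiv m hm) (1, _)) = k + 1
  rw [fA, gamma_apply, if_pos]
  · show finRotate n k = k + 1
    exact rot1 k
  · rw [half_cond m hm]

lemma vv_eq_of (n m : ℕ) (hm2 : 2 ≤ m) (hm : m % 2 = 0) (x : Fin n × Fin m) :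
    vv n m hm2 hm x.1 (((halfEquiv m hm).symm x.2).1) = Quotient.mk _ x := by
  apply Quotient.sound
  rw [orbX]
  show fX n m hm _ = fX n m hm x
  refine Prod.ext rfl ?_
  show ((halfEquiv m hm).symm ((halfEquiv m hm) _)).1 = ((halfEquiv m hm).symm x.2).1
  simp

lemma nb_qB (n m : ℕ) (hm2 : 2 ≤ m) (hm : m % 2 = 0) : nb (qBel n m hm) = (n : ℤ) := by
  have hbij : Function.Bijective
      (Quotient.lift (kB n m hm) (fun u v h => (qB_iff n m hm u v).1 h) :
        Quotient (qBel n m hm) → Fin n) := by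
    constructor
    · intro a b
      refine Quotient.inductionOn₂ a b ?_
      intro u v h
      exact Quotient.sound ((qB_iff n m hm u v).2 h)
    · intro k
      exact ⟨Quotient.mk _ (vv n m hm2 hm k 0), rfl⟩
  rw [nb, Nat.card_eq_of_bijective _ hbij, Nat.card_eq_fintype_card, Fintype.card_fin]

lemma nb_qA (n m : ℕ) (hm2 : 2 ≤ m) (hm : m % 2 = 0) : nb (qAel n m hm) = (n : ℤ) := by
  have hbij : Function.Bijective
      (Quotient.lift (kA n m hm) (fun u v h => (qA_iff n m hm u v).1 h) :
        Quotient (qAel n m hm) → Fin n) := by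
    constructor
    · intro a b
      refine Quotient.inductionOn₂ a b ?_
      intro u v h
      exact Quotient.sound ((qA_iff n m hm u v).2 h)
    · intro k
      exact ⟨Quotient.mk _ (vv n m hm2 hm k 0), kA_vv0 n m hm2 hm k⟩
  rw [nb, Nat.card_eq_of_bijective _ hbij, Nat.card_eq_fintype_card, Fintype.card_fin]

/-- the fiber of `kB` over a block label -/
def fiberB (n m : ℕ) (hm2 : 2 ≤ m) (hm : m % 2 = 0) (κ : Fin n) : Fin 2 ≃ {v : BX n m hm // kB n m hm v = κ} where
  toFun i := ⟨vv n m hm2 hm κ i, kB_vv n m hm2 hm κ i⟩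
  invFun v := hX2 n m hm v.1
  left_inv i := hX2_vv n m hm2 hm κ i
  right_inv := by
    rintro ⟨v, hv⟩
    obtain ⟨x, rfl⟩ := Quotient.exists_rep v
    apply Subtype.ext
    show vv n m hm2 hm κ (hX2 n m hm (Quotient.mk _ x)) = Quotient.mk _ x
    have h1 : hX2 n m hm (Quotient.mk _ x) = ((halfEquiv m hm).symm x.2).1 := rfl
    have h2 : κ = x.1 := hv.symm
    rw [h1, h2]
    exact vv_eq_of n m hm2 hm x

def fiberA (n m : ℕ) [NeZero n] (hm2 : 2 ≤ m) (hm : m % 2 = 0) (κ : Fin n) : Fin 2 ≃ {v : BX n m hm // kA n m hm v = κ} where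
  toFun i := if i = 0 then ⟨vv n m hm2 hm κ 0, kA_vv0 n m hm2 hm κ⟩ else
    ⟨vv n m hm2 hm (κ - 1) 1, by rw [kA_vv1 n m hm2 hm]; exact sub_add_cancel κ 1⟩
  invFun v := hX2 n m hm v.1
  left_inv i := by
    fin_cases i
    · simp [hX2_vv n m hm2 hm]
    · simp [hX2_vv n m hm2 hm]
  right_inv := by
    rintro ⟨v, hv⟩
    obtain ⟨x, rfl⟩ := Quotient.exists_rep v
    have h1 : hX2 n m hm (Quotient.mk _ x) = ((halfEquiv m hm).symm x.2).1 := rfl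
    have hfa : fA n m x = κ := hv
    by_cases hc : m / 2 ≤ (x.2 : ℕ)
    · have hi : ((halfEquiv m hm).symm x.2).1 = 1 := (cond_iff m hm x.2).1 hc
      have hx1 : x.1 + 1 = κ := by
        rw [← hfa, fA, gamma_apply, if_pos hc]
        exact (rot1 x.1).symm
      apply Subtype.ext
      show (if hX2 n m hm (Quotient.mk _ x) = 0 then _ else _ : {v : BX n m hm // _}).val
        = Quotient.mk _ x
      rw [h1, hi, if_neg (by decide)]
      show vv n m hm2 hm (κ - 1) 1 = Quotient.mk _ x
      have : κ - 1 = x.1 := by rw [← hx1]; exact add_sub_cancel_right x.1 1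
      rw [this, ← hi]
      exact vv_eq_of n m hm2 hm x
    · have hi : ((halfEquiv m hm).symm x.2).1 = 0 := by
        have := (cond_iff m hm x.2).not.1 hc
        omega
      have hx1 : x.1 = κ := by
        rw [← hfa, fA, gamma_apply, if_neg hc]
      apply Subtype.ext
      show (if hX2 n m hm (Quotient.mk _ x) = 0 then _ else _ : {v : BX n m hm // _}).val
        = Quotient.mk _ x
      rw [h1, hi, if_pos rfl]
      show vv n m hm2 hm κ 0 = Quotient.mk _ x
      rw [← hx1, ← hi]
      exact vv_eq_of n m hm2 hm x

lemma bs_qB (n m : ℕ) (hm2 : 2 ≤ m) (hm : m % 2 = 0) (u : BX n m hm) : blockSize (qBel n m hm) u = 2 := by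
  rw [blockSize]
  have e1 : {y // (qBel n m hm).r u y} ≃ {v : BX n m hm // kB n m hm v = kB n m hm u} :=
    Equiv.subtypeEquivRight (fun v => by
      show (qBel n m hm) u v ↔ _
      rw [qB_iff n m hm u v]
      exact eq_comm)
  rw [Nat.card_congr e1, Nat.card_congr (fiberB n m hm2 hm (kB n m hm u)).symm,
    Nat.card_eq_fintype_card, Fintype.card_fin]

lemma bs_qA (n m : ℕ) (hn : 2 ≤ n) (hm2 : 2 ≤ m) (hm : m % 2 = 0) (u : BX n m hm) : blockSize (qAel n m hm) u = 2 := by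
  haveI : NeZero n := ⟨by omega⟩
  rw [blockSize]
  have e1 : {y // (qAel n m hm).r u y} ≃ {v : BX n m hm // kA n m hm v = kA n m hm u} :=
    Equiv.subtypeEquivRight (fun v => by
      show (qAel n m hm) u v ↔ _
      rw [qA_iff n m hm u v]
      exact eq_comm)
  rw [Nat.card_congr e1, Nat.card_congr (fiberA n m hm2 hm (kA n m hm u)).symm,
    Nat.card_eq_fintype_card, Fintype.card_fin]

lemma singlet_blockSize {α : Type*} {s : Setoid α} {u : α} (h : IsSinglet s u) :
    blockSize s u = 1 := by
  rw [blockSize, Nat.card_eq_one_iff_unique]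
  constructor
  · constructor
    intro y y'
    apply Subtype.ext
    rw [h y.1 y.2, h y'.1 y'.2]
  · exact ⟨u, s.iseqv.refl u⟩

lemma no_singlet_qB (n m : ℕ) (hm2 : 2 ≤ m) (hm : m % 2 = 0) (u : BX n m hm) : ¬ IsSinglet (qBel n m hm) u := by
  intro h
  have := singlet_blockSize h
  rw [bs_qB n m hm2 hm u] at this
  omega

lemma no_singlet_qA (n m : ℕ) (hn : 2 ≤ n) (hm2 : 2 ≤ m) (hm : m % 2 = 0) (u : BX n m hm) : ¬ IsSinglet (qAel n m hm) u := by
  intro h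
  have := singlet_blockSize h
  rw [bs_qA n m hn hm2 hm u] at this
  omega

open Fin.NatCast in
lemma qAB_total (n m : ℕ) (hn : 2 ≤ n) (hm2 : 2 ≤ m) (hm : m % 2 = 0) : ∀ u v : BX n m hm, (qAel n m hm ⊔ qBel n m hm) u v := by
  haveI : NeZero n := ⟨by omega⟩
  set S := qAel n m hm ⊔ qBel n m hm with hS
  have hB : ∀ u v : BX n m hm, kB n m hm u = kB n m hm v → S u v := by
    intro u v h
    exact le_sup_right (a := qAel n m hm) ((qB_iff n m hm u v).2 h)
  have hA : ∀ u v : BX n m hm, kA n m hm u = kA n m hm v → S u v := by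
    intro u v h
    exact le_sup_left (b := qBel n m hm) ((qA_iff n m hm u v).2 h)
  have step : ∀ j : ℕ, S (vv n m hm2 hm 0 0) (vv n m hm2 hm (j : Fin n) 0) := by
    intro j
    induction j with
    | zero => simpa using S.iseqv.refl (vv n m hm2 hm 0 0)
    | succ j ih =>
      have s1 : S (vv n m hm2 hm (j : Fin n) 0) (vv n m hm2 hm (j : Fin n) 1) :=
        hB _ _ rfl
      have s2 : S (vv n m hm2 hm (j : Fin n) 1) (vv n m hm2 hm ((j + 1 : ℕ) : Fin n) 0) := by
        refine hA _ _ ?_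
        rw [kA_vv1 n m hm2 hm, kA_vv0 n m hm2 hm]
        push_cast
        ring
      exact S.iseqv.trans ih (S.iseqv.trans s1 s2)
  have all : ∀ k : Fin n, S (vv n m hm2 hm 0 0) (vv n m hm2 hm k 0) := by
    intro k
    have := step k.val
    rwa [Fin.cast_val_eq_self] at this
  intro u v
  have h1 : S u (vv n m hm2 hm (kB n m hm u) 0) := hB _ _ rfl
  have h2 : S v (vv n m hm2 hm (kB n m hm v) 0) := hB _ _ rfl
  exact S.iseqv.trans h1 (S.iseqv.trans (S.iseqv.symm (all _)) (S.iseqv.trans (all _)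
    (S.iseqv.symm h2)))

lemma nonempty_BX (n m : ℕ) (hn : 2 ≤ n) (hm2 : 2 ≤ m) (hm : m % 2 = 0) :
    Nonempty (BX n m hm) := by
  haveI : NeZero n := ⟨by omega⟩
  exact ⟨vv n m hm2 hm 0 0⟩

end concrete2


/-! ### Geodesic bounds on `BX` -/

lemma pdist_qA_qB (n m : ℕ) (hn : 2 ≤ n) (hm2 : 2 ≤ m) (hm : m % 2 = 0) :
    pdist (qAel n m hm) (qBel n m hm) = 2 * (n : ℤ) - 2 := by
  haveI := nonempty_BX n m hn hm2 hm
  unfold pdist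
  rw [nb_qA n m hm2 hm, nb_qB n m hm2 hm, nb_total (qAB_total n m hn hm2 hm)]
  ring

lemma geo (n m : ℕ) (hn : 2 ≤ n) (hm2 : 2 ≤ m) (hm : m % 2 = 0)
    (p : Setoid (BX n m hm)) (u₀ : BX n m hm) (hu : IsSinglet p u₀) :
    2 * (n : ℤ) ≤ pdist (qAel n m hm) p + pdist p (qBel n m hm) := by
  haveI := nonempty_BX n m hn hm2 hm
  have hstrict := master_strict p (qAel n m hm) (qBel n m hm) u₀ hu
    (fun x => by rw [bs_qA n m hn hm2 hm x]; exact even_two)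
    (fun x => by rw [bs_qB n m hm2 hm x]; exact even_two)
  have htot : nb (qAel n m hm ⊔ qBel n m hm ⊔ p) = 1 := by
    apply nb_total
    intro u v
    exact le_sup_left (b := p) (qAB_total n m hn hm2 hm u v)
  rw [htot] at hstrict
  have hc : nb (p ⊔ qBel n m hm) = nb (qBel n m hm ⊔ p) := by rw [sup_comm]
  unfold pdist
  rw [nb_qA n m hm2 hm, nb_qB n m hm2 hm, hc]
  omega

/-! ### Walk lemmas -/

section walks
variable {V : Type*} {G : SimpleGraph V} {κ : Type*} [Fintype κ]

lemma partEZ_mk (q : V → Setoid κ) (x y : V) :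
    partEZ q s(x, y) = pdist (q x) (q y) := rfl

lemma partEZ_nonneg (q : V → Setoid κ) (e : Sym2 V) : 0 ≤ partEZ q e := by
  induction e using Sym2.ind with
  | _ x y => rw [partEZ_mk]; exact pdist_nonneg _ _

lemma wkSum_nil (f : Sym2 V → ℤ) {x : V} : wkSum f (SimpleGraph.Walk.nil : G.Walk x x) = 0 :=
  rfl

lemma wkSum_cons (f : Sym2 V → ℤ) {x y z : V} (h : G.Adj x y) (L : G.Walk y z) :
    wkSum f (SimpleGraph.Walk.cons h L) = f s(x, y) + wkSum f L := by
  unfold wkSum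
  rw [SimpleGraph.Walk.edges_cons, List.map_cons, List.sum_cons]

lemma wkSum_append (f : Sym2 V → ℤ) {x y z : V} (L₁ : G.Walk x y) (L₂ : G.Walk y z) :
    wkSum f (L₁.append L₂) = wkSum f L₁ + wkSum f L₂ := by
  unfold wkSum
  rw [SimpleGraph.Walk.edges_append, List.map_append, List.sum_append]

lemma wkSum_parity (q : V → Setoid κ) {x y : V} (L : G.Walk x y) :
    2 ∣ (wkSum (partEZ q) L + nb (q x) + nb (q y)) := by
  induction L with
  | nil => rw [wkSum_nil]; exact ⟨nb (q _), by ring⟩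
  | @cons a b c h L ih =>
    rw [wkSum_cons, partEZ_mk]
    have h1 : 2 ∣ pdist (q a) (q b) + nb (q a) + nb (q b) :=
      ⟨nb (q a) + nb (q b) - nb (q a ⊔ q b), by unfold pdist; ring⟩
    omega

lemma wkSum_ge_pdist (q : V → Setoid κ) {x y : V} (L : G.Walk x y) :
    pdist (q x) (q y) ≤ wkSum (partEZ q) L := by
  induction L with
  | nil => rw [wkSum_nil, pdist_self]
  | @cons a b c h L ih =>
    rw [wkSum_cons, partEZ_mk]
    have := pdist_triangle (q a) (q b) (q c)
    omega

end walks


/-! ### Assembly -/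

section assembly
variable {V : Type*} [Fintype V] (G : SimpleGraph V)

lemma wsum_nonneg (w : Sym2 V → ℝ) (hw : ∀ e, 0 ≤ w e) (r : Sym2 V → ℕ)
    (S : Set (Sym2 V)) : 0 ≤ wsum (fun e => w e * (r e : ℝ)) S := by
  apply Finset.sum_nonneg
  intro e _
  exact mul_nonneg (hw e) (Nat.cast_nonneg _)

lemma feas_main (A B : Set V) (n m : ℕ) (hn : 2 ≤ n) (hm2 : 2 ≤ m) (hm : m % 2 = 0)
    (q : V → Setoid (BX n m hm))
    (hqA : ∀ v ∈ A, q v = qAel n m hm) (hqB : ∀ v ∈ B, q v = qBel n m hm) :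
    Bfeas G A B n (fun v => bvec (q v)) (fun e => (partEZ q e).toNat) := by
  have hfun : (fun e => (((partEZ q e).toNat : ℕ) : ℤ)) = partEZ q := by
    funext e
    exact Int.toNat_of_nonneg (partEZ_nonneg q e)
  constructor
  · intro x hx y hy L
    have hrw : wkSum (fun e => (((partEZ q e).toNat : ℕ) : ℤ)) L = wkSum (partEZ q) L := by
      rw [hfun]
    constructor
    · rw [hrw]
      have hpar := wkSum_parity q L
      rw [hqA x hx, hqB y hy, nb_qA n m hm2 hm, nb_qB n m hm2 hm] at hpar
      omega
    · rw [hrw]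
      by_cases hall : ∀ v ∈ L.support, ∀ k, bvec (q v) k = true
      · rw [if_pos hall]
        have h1 := wkSum_ge_pdist q L
        rw [hqA x hx, hqB y hy, pdist_qA_qB n m hn hm2 hm] at h1
        omega
      · rw [if_neg hall]
        push_neg at hall
        obtain ⟨v, hv, k, hk⟩ := hall
        have hsing : IsSinglet (q v) k := by
          by_contra hs
          exact hk (by rw [bvec, if_neg hs])
        have hsplit : wkSum (partEZ q) L =
            wkSum (partEZ q) (L.takeUntil v hv) + wkSum (partEZ q) (L.dropUntil v hv) := by
          conv_lhs => rw [← SimpleGraph.Walk.take_spec L hv]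
          rw [wkSum_append]
        have h1 := wkSum_ge_pdist q (L.takeUntil v hv)
        have h2 := wkSum_ge_pdist q (L.dropUntil v hv)
        rw [hqA x hx] at h1
        rw [hqB y hy] at h2
        have hgeo := geo n m hn hm2 hm (q v) k hsing
        omega
  · intro x y _
    have hcast : ((fun e => (partEZ q e).toNat) s(x, y) : ℤ) = pdist (q x) (q y) := by
      show (((partEZ q s(x, y)).toNat : ℕ) : ℤ) = _
      rw [Int.toNat_of_nonneg (partEZ_nonneg q _), partEZ_mk]
    rw [hcast, ge_iff_le, Int.ceil_le]
    have hham := ham_le_two_pdist (q x) (q y)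
    rw [div_le_iff₀ (by norm_num : (0:ℚ) < 2)]
    have h3 : ham (bvec (q x)) (bvec (q y)) ≤ pdist (q x) (q y) * 2 := by linarith
    exact_mod_cast h3

lemma cost_eq (w : Sym2 V → ℝ) {n m : ℕ} {hm : m % 2 = 0} (q : V → Setoid (BX n m hm)) :
    Qenergy G w q
      = wsum (fun e => w e * (((fun e => (partEZ q e).toNat) e : ℕ) : ℝ)) G.edgeSet := by
  unfold Qenergy wsum
  apply Finset.sum_congr rfl
  intro e _
  congr 1
  have h := Int.toNat_of_nonneg (partEZ_nonneg q e)
  have h2 : (((partEZ q e).toNat : ℤ) : ℝ) = ((partEZ q e : ℤ) : ℝ) := by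
    exact_mod_cast congrArg (fun z : ℤ => (z : ℝ)) h
  push_cast at h2 ⊢
  rw [h2]

lemma bot_singlet {κ : Type*} (k : κ) : IsSinglet (⊥ : Setoid κ) k := by
  intro y hy
  have : (⊥ : Setoid κ) k y := hy
  rw [Setoid.bot_def] at this
  exact this.symm

end assembly


end QB


/-- For every admissible `q : V → P_{2n}` one has `Q(q) ≥ B(b∘q)`,
where `(b∘q)(v) = b(q(v))` is the induced Boolean configuration; consequently `Q ≥ B`. -/
theorem Q_ge_B {V : Type*} [Fintype V] (G : SimpleGraph V)
    (w : Sym2 V → ℝ) (hw : ∀ e, 0 ≤ w e) (A B C : Set V) (hbdy : RTN.Bdy A B C)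
    {n m : ℕ} (hn : 2 ≤ n) (hm2 : 2 ≤ m) (hm : m % 2 = 0) :
    (∀ q : V → Setoid (RTN.BX n m hm),
      (∀ v ∈ A, q v = RTN.qAel n m hm) → (∀ v ∈ B, q v = RTN.qBel n m hm) →
      (∀ v ∈ C, q v = ⊥) →
      RTN.Qenergy G w q ≥ RTN.BvalAt G w A B n (fun v => RTN.bvec (q v))) ∧
    RTN.Qval G w A B C (RTN.qAel n m hm) (RTN.qBel n m hm) ≥
      RTN.Bval (RTN.BX n m hm) G w A B C n := by
  classical
  have part1 : ∀ q : V → Setoid (RTN.BX n m hm),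
      (∀ v ∈ A, q v = RTN.qAel n m hm) → (∀ v ∈ B, q v = RTN.qBel n m hm) →
      (∀ v ∈ C, q v = ⊥) →
      RTN.Qenergy G w q ≥ RTN.BvalAt G w A B n (fun v => RTN.bvec (q v)) := by
    intro q hqA hqB _
    rw [ge_iff_le]
    apply csInf_le
    · refine ⟨0, ?_⟩
      rintro a ⟨r, _, rfl⟩
      exact QB.wsum_nonneg w hw r _
    · exact ⟨fun e => (RTN.partEZ q e).toNat,
        QB.feas_main G A B n m hn hm2 hm q hqA hqB, QB.cost_eq G w q⟩
  refine ⟨part1, ?_⟩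
  rw [ge_iff_le]
  apply le_csInf
  · refine ⟨RTN.Qenergy G w (fun v => if v ∈ A then RTN.qAel n m hm else
      if v ∈ B then RTN.qBel n m hm else ⊥),
      (fun v => if v ∈ A then RTN.qAel n m hm else if v ∈ B then RTN.qBel n m hm else ⊥),
      ?_, ?_, ?_, rfl⟩
    · intro v hv
      show (if v ∈ A then RTN.qAel n m hm else if v ∈ B then RTN.qBel n m hm else ⊥) = _
      rw [if_pos hv]
    · intro v hv
      show (if v ∈ A then RTN.qAel n m hm else if v ∈ B then RTN.qBel n m hm else ⊥) = _
      rw [if_neg (fun hA' => Set.disjoint_left.mp hbdy.1 hA' hv), if_pos hv]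
    · intro v hv
      show (if v ∈ A then RTN.qAel n m hm else if v ∈ B then RTN.qBel n m hm else ⊥) = _
      rw [if_neg (fun hA' => Set.disjoint_left.mp hbdy.2.1 hA' hv),
        if_neg (fun hB' => Set.disjoint_left.mp hbdy.2.2 hB' hv)]
  · rintro a ⟨q, hqA, hqB, hqC, rfl⟩
    apply csInf_le
    · refine ⟨0, ?_⟩
      rintro a ⟨b, _, _, r, _, rfl⟩
      exact QB.wsum_nonneg w hw r _
    · refine ⟨fun v => RTN.bvec (q v), ?_, ?_, fun e => (RTN.partEZ q e).toNat,
        QB.feas_main G A B n m hn hm2 hm q hqA hqB, QB.cost_eq G w q⟩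
      · intro v hv k
        show RTN.bvec (q v) k = true
        rcases hv with hv | hv
        · rw [hqA v hv, RTN.bvec, if_neg (QB.no_singlet_qA n m hn hm2 hm k)]
        · rw [hqB v hv, RTN.bvec, if_neg (QB.no_singlet_qB n m hm2 hm k)]
      · intro v hv k
        show RTN.bvec (q v) k = false
        rw [hqC v hv, RTN.bvec, if_pos (QB.bot_singlet k)]
end
end

section
/- Let G=(V,E) be a weighted graph with boundary ∂=A⊔B⊔C and tensions t=(t_{A:B},t_{B:C},t_{C:A}) with t_{A:C}=t_{B:C}>0 and t_{A:B}>0. If r_C⊆V is a minimal cut for C:A∪B, then there exists an optimal triway cut (α,β,γ) for (A,B,C) with r_C⊆γ. -/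
open scoped Classical

noncomputable section

namespace RTN

section AuxSubmodular

variable {V : Type*} [Fintype V]

lemma wsum_nonneg' (w : Sym2 V → ℝ) (hw : ∀ e, 0 ≤ w e) (S : Set (Sym2 V)) : 0 ≤ wsum w S :=
  Finset.sum_nonneg fun e _ => hw e

lemma wsum_mono' (w : Sym2 V → ℝ) (hw : ∀ e, 0 ≤ w e) {S T : Set (Sym2 V)} (h : S ⊆ T) :
    wsum w S ≤ wsum w T := by
  apply Finset.sum_le_sum_of_subset_of_nonneg
  · intro e he
    simp only [Finset.mem_filter, Finset.mem_univ, true_and] at *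
    exact h he
  · intro e _ _; exact hw e

lemma wsum_union' (w : Sym2 V → ℝ) {S T : Set (Sym2 V)} (h : Disjoint S T) :
    wsum w (S ∪ T) = wsum w S + wsum w T := by
  unfold wsum
  rw [← Finset.sum_union]
  · congr 1
    ext e
    simp [Set.mem_union]
  · rw [Finset.disjoint_left]
    intro e he he'
    simp only [Finset.mem_filter, Finset.mem_univ, true_and] at he he'
    exact Set.disjoint_left.mp h he he'

omit [Fintype V] in
lemma mem_mu_iff' (G : SimpleGraph V) (r : Set V) (x y : V) :
    s(x,y) ∈ mu G r ↔ s(x,y) ∈ G.edgeSet ∧ ((x ∈ r ∧ y ∉ r) ∨ (y ∈ r ∧ x ∉ r)) := by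
  constructor
  · rintro ⟨he, a, b, hab, ha, hb⟩
    refine ⟨he, ?_⟩
    rcases Sym2.eq_iff.mp hab with ⟨rfl, rfl⟩ | ⟨rfl, rfl⟩
    · exact Or.inl ⟨ha, hb⟩
    · exact Or.inr ⟨ha, hb⟩
  · rintro ⟨he, ⟨ha, hb⟩ | ⟨ha, hb⟩⟩
    · exact ⟨he, x, y, rfl, ha, hb⟩
    · exact ⟨he, y, x, Sym2.eq_swap.symm, ha, hb⟩

omit [Fintype V] in
lemma mem_mu2_iff' (G : SimpleGraph V) (r₁ r₂ : Set V) (x y : V) :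
    s(x,y) ∈ mu2 G r₁ r₂ ↔ s(x,y) ∈ G.edgeSet ∧ ((x ∈ r₁ ∧ y ∈ r₂) ∨ (y ∈ r₁ ∧ x ∈ r₂)) := by
  constructor
  · rintro ⟨he, a, b, hab, ha, hb⟩
    refine ⟨he, ?_⟩
    rcases Sym2.eq_iff.mp hab with ⟨rfl, rfl⟩ | ⟨rfl, rfl⟩
    · exact Or.inl ⟨ha, hb⟩
    · exact Or.inr ⟨ha, hb⟩
  · rintro ⟨he, ⟨ha, hb⟩ | ⟨ha, hb⟩⟩
    · exact ⟨he, x, y, rfl, ha, hb⟩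
    · exact ⟨he, y, x, Sym2.eq_swap.symm, ha, hb⟩

lemma wsum_eq_sum_ite (w : Sym2 V → ℝ) (S : Set (Sym2 V)) :
    wsum w S = ∑ e : Sym2 V, if e ∈ S then w e else 0 := by
  unfold wsum
  rw [Finset.sum_filter]

lemma mu_submod (G : SimpleGraph V) (w : Sym2 V → ℝ) (hw : ∀ e, 0 ≤ w e) (r₁ r₂ : Set V) :
    wsum w (mu G (r₁ ∪ r₂)) + wsum w (mu G (r₁ ∩ r₂)) ≤ wsum w (mu G r₁) + wsum w (mu G r₂) := by
  simp only [wsum_eq_sum_ite]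
  rw [← Finset.sum_add_distrib, ← Finset.sum_add_distrib]
  apply Finset.sum_le_sum
  intro e _
  induction e using Sym2.ind with
  | _ x y =>
    by_cases he : s(x,y) ∈ G.edgeSet
    · by_cases hxr : x ∈ r₁ <;> by_cases hyr : y ∈ r₁ <;> by_cases hxs : x ∈ r₂ <;>
        by_cases hys : y ∈ r₂ <;>
        simp_all [mem_mu_iff', Set.mem_union, Set.mem_inter_iff] <;>
        linarith [hw s(x,y)]
    · have h1 : ∀ r : Set V, s(x,y) ∉ mu G r := fun r h => he h.1
      simp [h1]

lemma cut_split' (G : SimpleGraph V) (w : Sym2 V → ℝ) {α β γ : Set V}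
    (hU : α ∪ β ∪ γ = Set.univ) (hab : Disjoint α β) (hbg : Disjoint β γ)
    (hag : Disjoint α γ) :
    wsum w (mu G γ) = wsum w (mu2 G β γ) + wsum w (mu2 G γ α) := by
  have hset : mu G γ = mu2 G β γ ∪ mu2 G γ α := by
    ext e
    induction e using Sym2.ind with
    | _ x y =>
      simp only [Set.mem_union, mem_mu_iff', mem_mu2_iff']
      constructor
      · rintro ⟨he, ⟨hx, hy⟩ | ⟨hy, hx⟩⟩
        · have : y ∈ α ∪ β ∪ γ := hU ▸ Set.mem_univ y
          rcases this with (hy' | hy') | hy'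
          · exact Or.inr ⟨he, Or.inl ⟨hx, hy'⟩⟩
          · exact Or.inl ⟨he, Or.inr ⟨hy', hx⟩⟩
          · exact absurd hy' hy
        · have : x ∈ α ∪ β ∪ γ := hU ▸ Set.mem_univ x
          rcases this with (hx' | hx') | hx'
          · exact Or.inr ⟨he, Or.inr ⟨hy, hx'⟩⟩
          · exact Or.inl ⟨he, Or.inl ⟨hx', hy⟩⟩
          · exact absurd hx' hx
      · rintro (⟨he, ⟨hx, hy⟩ | ⟨hy, hx⟩⟩ | ⟨he, ⟨hx, hy⟩ | ⟨hy, hx⟩⟩)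
        · exact ⟨he, Or.inr ⟨hy, Set.disjoint_left.mp hbg hx⟩⟩
        · exact ⟨he, Or.inl ⟨hx, Set.disjoint_left.mp hbg hy⟩⟩
        · exact ⟨he, Or.inl ⟨hx, Set.disjoint_left.mp hag hy⟩⟩
        · exact ⟨he, Or.inr ⟨hy, Set.disjoint_left.mp hag hx⟩⟩
  rw [hset]
  apply wsum_union'
  rw [Set.disjoint_left]
  intro e h1 h2
  revert h1 h2
  induction e using Sym2.ind with
  | _ x y =>
    intro h1 h2
    rw [mem_mu2_iff'] at h1 h2
    rcases h1.2 with ⟨hx, hy⟩ | ⟨hy, hx⟩ <;> rcases h2.2 with ⟨hx', hy'⟩ | ⟨hy', hx'⟩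
    · exact Set.disjoint_left.mp hbg hx hx'
    · exact Set.disjoint_left.mp hab hx' hx
    · exact Set.disjoint_left.mp hab hy' hy
    · exact Set.disjoint_left.mp hag hx' hx

omit [Fintype V] in
lemma mu2_mono' (G : SimpleGraph V) {a b a' b' : Set V} (ha : a' ⊆ a) (hb : b' ⊆ b) :
    mu2 G a' b' ⊆ mu2 G a b := by
  rintro e ⟨he, x, y, hxy, hx, hy⟩
  exact ⟨he, x, y, hxy, ha hx, hb hy⟩

end AuxSubmodular

end RTN

/-- If `r_C` is a minimal cut for `C : A∪B` and the tensions satisfy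
`t_{A:C} = t_{B:C} > 0`, `t_{A:B} > 0`, then there exists an optimal triway cut
`(α,β,γ)` for `(A,B,C)` with `r_C ⊆ γ`. -/
theorem minimal_cut_inside_triway_cut {V : Type*} [Fintype V] (G : SimpleGraph V)
    (w : Sym2 V → ℝ) (hw : ∀ e, 0 ≤ w e) (A B C : Set V) (hbdy : RTN.Bdy A B C)
    (tAB tC : ℝ) (htAB : 0 < tAB) (htC : 0 < tC)
    (rC : Set V) (hcut : RTN.IsCut C (A ∪ B) rC)
    (hmin : RTN.wsum w (RTN.mu G rC) = RTN.minCut G w C (A ∪ B)) :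
    ∃ α β γ : Set V, RTN.IsTriway A B C α β γ ∧ rC ⊆ γ ∧
      RTN.triArea G w tAB tC tC α β γ = RTN.triCut G w tAB tC tC A B C := by
  classical
  obtain ⟨hAB, hAC, hBC⟩ := hbdy
  obtain ⟨hCr, hABr⟩ := hcut
  set T : Set ℝ := {a | ∃ α β γ : Set V, RTN.IsTriway A B C α β γ ∧
    a = RTN.triArea G w tAB tC tC α β γ} with hT
  have hTC : RTN.triCut G w tAB tC tC A B C = sInf T := rfl
  have hTfin : T.Finite := by
    apply Set.Finite.subset (Set.finite_range fun p : Set V × Set V × Set V =>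
      RTN.triArea G w tAB tC tC p.1 p.2.1 p.2.2)
    rintro a ⟨α, β, γ, _, rfl⟩
    exact ⟨(α, β, γ), rfl⟩
  have hTne : T.Nonempty := by
    refine ⟨_, A, B, (A ∪ B)ᶜ, ⟨Set.union_compl_self (A ∪ B), hAB, ?_, ?_, subset_rfl, subset_rfl, ?_⟩, rfl⟩
    · rw [Set.disjoint_left]; intro x hx hx'; exact hx' (Or.inr hx)
    · rw [Set.disjoint_left]; intro x hx hx'; exact hx' (Or.inl hx)
    · intro x hx hx'
      rcases hx' with h | h
      · exact Set.disjoint_left.mp hAC h hx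
      · exact Set.disjoint_left.mp hBC h hx
  obtain ⟨α, β, γ, htri, heq⟩ := hTne.csInf_mem hTfin
  obtain ⟨hU, d1, d2, d3, hA, hB, hC⟩ := htri
  set α' : Set V := α \ rC with hα'
  set β' : Set V := β \ rC with hβ'
  set γ' : Set V := γ ∪ rC with hγ'
  have htri' : RTN.IsTriway A B C α' β' γ' := by
    refine ⟨?_, ?_, ?_, ?_, ?_, ?_, ?_⟩
    · apply Set.eq_univ_of_forall
      intro x
      by_cases hx : x ∈ rC
      · exact Or.inr (Or.inr hx)
      · have hx' : x ∈ α ∪ β ∪ γ := hU ▸ Set.mem_univ x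
        rcases hx' with (h | h) | h
        · exact Or.inl (Or.inl ⟨h, hx⟩)
        · exact Or.inl (Or.inr ⟨h, hx⟩)
        · exact Or.inr (Or.inl h)
    · rw [Set.disjoint_left]
      rintro x ⟨hx, _⟩ ⟨hy, _⟩
      exact Set.disjoint_left.mp d1 hx hy
    · rw [Set.disjoint_left]
      rintro x ⟨hx, hxr⟩ hy
      rcases hy with h | h
      · exact Set.disjoint_left.mp d2 hx h
      · exact hxr h
    · rw [Set.disjoint_left]
      rintro x ⟨hx, hxr⟩ hy
      rcases hy with h | h
      · exact Set.disjoint_left.mp d3 hx h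
      · exact hxr h
    · intro x hx
      exact ⟨hA hx, hABr (Or.inl hx)⟩
    · intro x hx
      exact ⟨hB hx, hABr (Or.inr hx)⟩
    · intro x hx
      exact Or.inl (hC hx)
  have hU' : α' ∪ β' ∪ γ' = Set.univ := htri'.1
  have e1 : RTN.triArea G w tAB tC tC α β γ =
      tAB * RTN.wsum w (RTN.mu2 G α β) + tC * RTN.wsum w (RTN.mu G γ) := by
    unfold RTN.triArea
    rw [RTN.cut_split' G w hU d1 d2 d3]
    ring
  have e2 : RTN.triArea G w tAB tC tC α' β' γ' =
      tAB * RTN.wsum w (RTN.mu2 G α' β') + tC * RTN.wsum w (RTN.mu G γ') := by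
    unfold RTN.triArea
    rw [RTN.cut_split' G w hU' htri'.2.1 htri'.2.2.1 htri'.2.2.2.1]
    ring
  have hmin_le : RTN.wsum w (RTN.mu G rC) ≤ RTN.wsum w (RTN.mu G (γ ∩ rC)) := by
    rw [hmin]
    apply csInf_le
    · refine ⟨0, ?_⟩
      rintro a ⟨r, _, rfl⟩
      exact RTN.wsum_nonneg' w hw _
    · refine ⟨γ ∩ rC, ⟨Set.subset_inter hC hCr, ?_⟩, rfl⟩
      intro x hx hx'
      exact hABr hx hx'.2
  have hsub := RTN.mu_submod G w hw γ rC
  have hgam : RTN.wsum w (RTN.mu G γ') ≤ RTN.wsum w (RTN.mu G γ) := by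
    rw [hγ']
    linarith
  have hab' : RTN.wsum w (RTN.mu2 G α' β') ≤ RTN.wsum w (RTN.mu2 G α β) :=
    RTN.wsum_mono' w hw (RTN.mu2_mono' G Set.diff_subset Set.diff_subset)
  have hle : RTN.triArea G w tAB tC tC α' β' γ' ≤ RTN.triArea G w tAB tC tC α β γ := by
    rw [e1, e2]
    have h1 := mul_le_mul_of_nonneg_left hab' htAB.le
    have h2 := mul_le_mul_of_nonneg_left hgam htC.le
    linarith
  have hge : sInf T ≤ RTN.triArea G w tAB tC tC α' β' γ' :=
    csInf_le hTfin.bddBelow ⟨α', β', γ', htri', rfl⟩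
  refine ⟨α', β', γ', htri', Set.subset_union_right, ?_⟩
  rw [hTC]
  exact le_antisymm (by rw [← heq] at hle; exact hle) hge
end
end

section
/- Let G=(V,E) be a weighted graph with boundary ∂=A⊔B⊔C, let n≥2 be an integer, and suppose ρ:E→ℤ_{≥0} satisfies ρ(L)≥n for every path L∈𝒫_{A∪B,C}. Let (AB)₀={x∈V : d_ρ(x,A∪B)=0} be the set of vertices reachable from A∪B along a path on which ρ vanishes on every edge. Then for every edge e both of whose endpoints lie in (AB)₀ and every path L∈𝒫_{A∪B,C} with e∈L, one has ρ(L)−ρ(e)≥n. -/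
open scoped Classical

noncomputable section

/-- If `ρ : E → ℤ_{≥0}` satisfies `ρ(L) ≥ n` on all paths from `A∪B` to
`C`, and `e = {x,y}` is an edge whose endpoints are both reachable from `A∪B` along
`ρ`-free paths, then for every path `L ∈ 𝒫_{A∪B,C}` containing `e`: `ρ(L) - ρ(e) ≥ n`. -/
theorem rho_binding_estimate {V : Type*} [Fintype V] (G : SimpleGraph V)
    (w : Sym2 V → ℝ) (hw : ∀ e, 0 ≤ w e) (A B C : Set V) (hbdy : RTN.Bdy A B C)
    {n : ℕ} (hn : 2 ≤ n) (ρ : Sym2 V → ℕ)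
    (hfeas : ∀ x ∈ A ∪ B, ∀ y ∈ C, ∀ L : G.Walk x y,
      (n : ℤ) ≤ RTN.wkSum (fun e => (ρ e : ℤ)) L)
    (x y : V) (hxy : G.Adj x y)
    (hx : ∃ a ∈ A ∪ B, ∃ L : G.Walk a x, ∀ e ∈ L.edges, ρ e = 0)
    (hy : ∃ a ∈ A ∪ B, ∃ L : G.Walk a y, ∀ e ∈ L.edges, ρ e = 0) :
    ∀ a ∈ A ∪ B, ∀ c ∈ C, ∀ L : G.Walk a c, s(x, y) ∈ L.edges →
      (n : ℤ) ≤ RTN.wkSum (fun e => (ρ e : ℤ)) L - (ρ s(x, y) : ℤ) := by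
  classical
  -- auxiliary: the tail after reaching x or y has ρ-sum ≥ n
  have tail_bound : ∀ b, (b = x ∨ b = y) → ∀ c ∈ C, ∀ p : G.Walk b c,
      (n : ℤ) ≤ RTN.wkSum (fun e => (ρ e : ℤ)) p := by
    intro b hb c hc p
    have h0 : ∃ a ∈ A ∪ B, ∃ L0 : G.Walk a b, ∀ e ∈ L0.edges, ρ e = 0 := by
      rcases hb with rfl | rfl
      · exact hx
      · exact hy
    obtain ⟨a, ha, L0, hL0⟩ := h0
    have := hfeas a ha c hc (L0.append p)
    have hsum : RTN.wkSum (fun e => (ρ e : ℤ)) (L0.append p) =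
        RTN.wkSum (fun e => (ρ e : ℤ)) L0 + RTN.wkSum (fun e => (ρ e : ℤ)) p := by
      simp [RTN.wkSum, SimpleGraph.Walk.edges_append]
    have hz : RTN.wkSum (fun e => (ρ e : ℤ)) L0 = 0 := by
      simp only [RTN.wkSum]
      rw [List.sum_eq_zero]
      intro z hz
      simp only [List.mem_map] at hz
      obtain ⟨e, he, rfl⟩ := hz
      simp [hL0 e he]
    rw [hsum, hz, zero_add] at this
    exact this
  have key : ∀ (v c : V), c ∈ C → ∀ L : G.Walk v c, s(x, y) ∈ L.edges →
      (n : ℤ) ≤ RTN.wkSum (fun e => (ρ e : ℤ)) L - (ρ s(x, y) : ℤ) := by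
    intro v c hc L
    induction L with
    | nil => intro h; simp at h
    | @cons u b c' h' p ih =>
      intro hmem
      rw [SimpleGraph.Walk.edges_cons, List.mem_cons] at hmem
      have hcons : RTN.wkSum (fun e => (ρ e : ℤ)) (SimpleGraph.Walk.cons h' p) =
          (ρ s(u, b) : ℤ) + RTN.wkSum (fun e => (ρ e : ℤ)) p := by
        simp [RTN.wkSum]
      rcases hmem with heq | hmem
      · -- the first edge is s(x,y)
        have hb : b = x ∨ b = y := by
          rw [Sym2.eq_iff] at heq
          rcases heq with ⟨_, rfl⟩ | ⟨rfl, _⟩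
          · exact Or.inr rfl
          · exact Or.inl rfl
        have := tail_bound b hb c' hc p
        rw [hcons, ← heq]
        omega
      · have := ih hc hmem
        rw [hcons]
        have : (0:ℤ) ≤ (ρ s(u, b) : ℤ) := Int.ofNat_nonneg _
        omega
  intro a _ c hc L hL
  exact key a c hc L hL
end
end
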